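/- arXiv:1412.7388 — 7 statements merged into one kernel-verified Lean document; each statement's English description precedes it below -/
import Mathlib

section
/- Let A be a real symmetric n×n matrix with spectral decomposition A = U Λ Uᵀ, X = e^{Λ/2} Uᵀ, and let x_p denote the p-th column of X. Define ξ_{pq}² = (e^A)_{pp} + (e^A)_{qq} − 2(e^A)_{pq}. Then ξ_{pq}² = ‖x_p − x_q‖², the squared Euclidean distance between x_p and x_q; consequently ξ_{pq} = √((e^A)_{pp} + (e^A)_{qq} − 2(e^A)_{pq}) is nonnegative, symmetric, and satisfies the triangle inequality ξ_{pr} ≤ ξ_{pq} + ξ_{qr} for all indices p, q, r. -/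
open Matrix

/-- With `A = U D Uᵀ` a spectral decomposition of a real symmetric matrix,
`X = e^{D/2} Uᵀ` with columns `x_p`, and `ξ_{pq}² = (e^A)_{pp} + (e^A)_{qq} − 2(e^A)_{pq}`,
one has `ξ_{pq}² = ‖x_p − x_q‖²`; consequently `ξ` is nonnegative, symmetric and satisfies
the triangle inequality. -/
theorem communicability_distance_eq_euclidean
    (n : ℕ) (A U D : Matrix (Fin n) (Fin n) ℝ)
    (hA : A.IsSymm) (hD : D.IsDiag)
    (hU : U * Uᵀ = 1) (hU' : Uᵀ * U = 1)
    (hdecomp : A = U * D * Uᵀ)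
    (X : Matrix (Fin n) (Fin n) ℝ)
    (hX : X = NormedSpace.exp ((1 / 2 : ℝ) • D) * Uᵀ)
    (ξ : Fin n → Fin n → ℝ)
    (hξ : ∀ p q, ξ p q = Real.sqrt (NormedSpace.exp A p p + NormedSpace.exp A q q
        - 2 * NormedSpace.exp A p q)) :
    (∀ p q, NormedSpace.exp A p p + NormedSpace.exp A q q - 2 * NormedSpace.exp A p q
        = ∑ i, (X i p - X i q) ^ 2) ∧
    (∀ p q, 0 ≤ ξ p q) ∧
    (∀ p q, ξ p q = ξ q p) ∧
    (∀ p q r, ξ p r ≤ ξ p q + ξ q r) := by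
  -- U is a unit and Uᵀ = U⁻¹
  have hUdet : IsUnit U.det := by
    apply IsUnit.of_mul_eq_one Uᵀ.det
    rw [← Matrix.det_mul, hU, Matrix.det_one]
  have hUunit : IsUnit U := (Matrix.isUnit_iff_isUnit_det U).mpr hUdet
  have hUinv : U⁻¹ = Uᵀ := Matrix.inv_eq_right_inv hU
  -- exp A = U * exp D * Uᵀ
  have hexpA : NormedSpace.exp A = U * NormedSpace.exp D * Uᵀ := by
    rw [hdecomp, ← hUinv, Matrix.exp_conj U D hUunit]
  -- exp(D/2) * exp(D/2) = exp D
  have hhalf : NormedSpace.exp ((1 / 2 : ℝ) • D) * NormedSpace.exp ((1 / 2 : ℝ) • D)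
      = NormedSpace.exp D := by
    rw [← Matrix.exp_add_of_commute _ _ (Commute.refl _)]
    congr 1
    rw [← add_smul]
    norm_num
  -- exp(D/2) is symmetric
  have hDsymm : ((1 / 2 : ℝ) • D).IsSymm := (hD.smul _).isSymm
  have hEsymm : (NormedSpace.exp ((1 / 2 : ℝ) • D))ᵀ
      = NormedSpace.exp ((1 / 2 : ℝ) • D) := by
    rw [← Matrix.exp_transpose, hDsymm]
  -- Xᵀ * X = exp A
  have hXX : Xᵀ * X = NormedSpace.exp A := by
    rw [hX, Matrix.transpose_mul, Matrix.transpose_transpose, hEsymm, hexpA]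
    rw [Matrix.mul_assoc, ← Matrix.mul_assoc (NormedSpace.exp ((1 / 2 : ℝ) • D)), hhalf]
    rw [Matrix.mul_assoc U]
  -- entrywise formula
  have hentry : ∀ p q, NormedSpace.exp A p q = ∑ i, X i p * X i q := by
    intro p q
    rw [← hXX]
    simp [Matrix.mul_apply, Matrix.transpose_apply]
  have main : ∀ p q, NormedSpace.exp A p p + NormedSpace.exp A q q
      - 2 * NormedSpace.exp A p q = ∑ i, (X i p - X i q) ^ 2 := by
    intro p q
    rw [hentry, hentry, hentry, Finset.mul_sum, ← Finset.sum_add_distrib,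
      ← Finset.sum_sub_distrib]
    exact Finset.sum_congr rfl fun i _ => by ring
  refine ⟨main, ?_, ?_, ?_⟩
  -- realize ξ as a Euclidean distance
  · intro p q; rw [hξ]; exact Real.sqrt_nonneg _
  all_goals
    have hdist : ∀ p q, ξ p q
        = dist ((WithLp.equiv 2 (Fin n → ℝ)).symm fun i => X i p)
            ((WithLp.equiv 2 (Fin n → ℝ)).symm fun i => X i q) := by
      intro p q
      rw [hξ, main, EuclideanSpace.dist_eq]
      congr 1
      exact Finset.sum_congr rfl fun i _ => by
        rw [Real.dist_eq, sq_abs]; rfl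
  · intro p q; rw [hdist, hdist, dist_comm]
  · intro p q r; rw [hdist, hdist, hdist]; exact dist_triangle _ _ _
end

section
/- Let A be the adjacency matrix of a simple connected graph on n vertices, with spectral decomposition A = U Λ Uᵀ, X = e^{Λ/2} Uᵀ, and x_p the p-th column of X. Let s ∈ ℝⁿ be the vector with entries s_p = (e^A)_{pp}, let 1 be the all-ones vector, and set a = 1ᵀ e^{−A} 1, b = sᵀ e^{−A} 1, c = sᵀ e^{−A} s. Then a > 0, the quantity R² = (c − (2 − b)²/a)/4 is nonnegative, and there exists a point x₀ ∈ ℝⁿ such that ‖x_p − x₀‖² = R² for every vertex p; that is, all points x_p lie on a hypersphere of radius R = √(R²). -/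
open Matrix

/-- Let `A` be the adjacency matrix of a simple connected graph on `n`
vertices, with spectral decomposition `A = U D Uᵀ`, `X = e^{D/2} Uᵀ`, and `x_p` the `p`-th
column of `X`.  With `s_p = (e^A)_{pp}`, `a = 1ᵀ e^{−A} 1`, `b = sᵀ e^{−A} 1`,
`c = sᵀ e^{−A} s`, we have `a > 0`, `R² = (c − (2 − b)²/a)/4 ≥ 0`, and all the points `x_p`
lie on a hypersphere of radius `R = √(R²)` centred at some point `x₀`. -/
theorem hyperspherical_embedding
    (n : ℕ) (G : SimpleGraph (Fin n)) [DecidableRel G.Adj] (hconn : G.Connected)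
    (A U D : Matrix (Fin n) (Fin n) ℝ)
    (hAdj : A = G.adjMatrix ℝ)
    (hD : D.IsDiag) (hU : U * Uᵀ = 1) (hU' : Uᵀ * U = 1)
    (hdecomp : A = U * D * Uᵀ)
    (X : Matrix (Fin n) (Fin n) ℝ)
    (hX : X = NormedSpace.exp ((1 / 2 : ℝ) • D) * Uᵀ)
    (s : Fin n → ℝ) (hs : ∀ p, s p = NormedSpace.exp A p p)
    (a b c : ℝ)
    (ha : a = ∑ p, ∑ q, NormedSpace.exp (-A) p q)
    (hb : b = ∑ p, ∑ q, s p * NormedSpace.exp (-A) p q)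
    (hc : c = ∑ p, ∑ q, s p * NormedSpace.exp (-A) p q * s q) :
    0 < a ∧
    0 ≤ (c - (2 - b) ^ 2 / a) / 4 ∧
    ∃ x₀ : Fin n → ℝ, ∀ p, ∑ i, (X i p - x₀ i) ^ 2 = (c - (2 - b) ^ 2 / a) / 4 := by
  classical
  have hne : Nonempty (Fin n) := hconn.nonempty
  have hUinv : U⁻¹ = Uᵀ := Matrix.inv_eq_left_inv hU'
  have := invertibleOfRightInverse (a := U) (b := Uᵀ) hU
  have hUu : IsUnit U := isUnit_of_invertible U
  have hDd : D = Matrix.diagonal (fun i => D i i) := (Matrix.IsDiag.diagonal_diag hD).symm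
  have hexpD : ∀ t : ℝ,
      NormedSpace.exp (t • D) = Matrix.diagonal (fun i => Real.exp (t * D i i)) := by
    intro t
    conv_lhs => rw [hDd]
    rw [← Matrix.diagonal_smul, Matrix.exp_diagonal, Pi.exp_def]
    funext i
    rw [Real.exp_eq_exp_ℝ]; rfl
  set E := NormedSpace.exp A with hE
  set F := NormedSpace.exp (-A) with hF
  have hexpA : E = U * NormedSpace.exp D * Uᵀ := by
    rw [hE, hdecomp, ← hUinv, Matrix.exp_conj U D hUu]
  have hexpA' : F = U * Matrix.diagonal (fun i => Real.exp (-1 * D i i)) * Uᵀ := by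
    rw [hF, hdecomp, ← hUinv, show -(U * D * U⁻¹) = U * (-D) * U⁻¹ by noncomm_ring,
      Matrix.exp_conj U (-D) hUu, show -D = (-1 : ℝ) • D by simp, hexpD (-1)]
  have hEF : E * F = 1 := by
    rw [hE, hF, ← Matrix.exp_add_of_commute A (-A) (Commute.neg_right (Commute.refl A)),
      add_neg_cancel, NormedSpace.exp_zero]
  have hexpD1 : NormedSpace.exp D = Matrix.diagonal (fun i => Real.exp (D i i)) := by
    have := hexpD 1; rw [one_smul] at this; simpa using this
  have hXX : Xᵀ * X = E := by
    rw [hX, Matrix.transpose_mul, Matrix.transpose_transpose, hexpD (1/2),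
      Matrix.diagonal_transpose, hexpA, hexpD1]
    rw [Matrix.mul_assoc U, ← Matrix.mul_assoc (Matrix.diagonal _) (Matrix.diagonal _),
      Matrix.diagonal_mul_diagonal, ← Matrix.mul_assoc,
      show (fun i => Real.exp (1 / 2 * D i i) * Real.exp (1 / 2 * D i i))
          = fun i => Real.exp (D i i) from funext fun i => by rw [← Real.exp_add]; ring_nf]
  have hAsym : Aᵀ = A := by rw [hAdj]; exact SimpleGraph.transpose_adjMatrix G
  have hFsym : ∀ p q, F p q = F q p := by
    intro p q
    have h : Fᵀ = F := by
      rw [hF, ← Matrix.exp_transpose, Matrix.transpose_neg, hAsym]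
    exact (congrFun (congrFun h q) p)
  set o : Fin n → ℝ := fun _ => 1 with ho
  have hdot : ∀ M : Matrix (Fin n) (Fin n) ℝ, ∑ p, ∑ q, M p q = o ⬝ᵥ (M *ᵥ o) := by
    intro M; simp [dotProduct, mulVec, ho]
  -- positivity of a
  have hu : Uᵀ *ᵥ o ≠ 0 := by
    intro h
    have h2 : U *ᵥ (Uᵀ *ᵥ o) = o := by
      rw [Matrix.mulVec_mulVec, hU, Matrix.one_mulVec]
    rw [h, Matrix.mulVec_zero] at h2
    have := congrFun h2 (Classical.arbitrary (Fin n))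
    simp [ho] at this
  obtain ⟨i, hi⟩ := Function.ne_iff.mp hu
  have hapos : 0 < a := by
    have key : a = ∑ j, Real.exp (-1 * D j j) * ((Uᵀ *ᵥ o) j) ^ 2 := by
      rw [ha, hdot, hexpA', ← Matrix.mulVec_mulVec, ← Matrix.mulVec_mulVec,
        Matrix.dotProduct_mulVec, ← Matrix.mulVec_transpose]
      simp only [dotProduct, Matrix.mulVec_diagonal]
      exact Finset.sum_congr rfl fun j _ => by ring
    rw [key]
    apply Finset.sum_pos'
    · intro j _; positivity
    · refine ⟨i, Finset.mem_univ i, mul_pos (Real.exp_pos _) ?_⟩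
      have hi' : (Uᵀ *ᵥ o) i ≠ 0 := by simpa using hi
      exact lt_of_le_of_ne (sq_nonneg _) (Ne.symm (pow_ne_zero 2 hi'))
  have ha0 : a ≠ 0 := ne_of_gt hapos
  -- the centre
  set α : ℝ := (2 - b) / a with hα
  set v : Fin n → ℝ := fun p => (s p + α) / 2 with hv
  set w : Fin n → ℝ := F *ᵥ v with hw
  set x₀ : Fin n → ℝ := X *ᵥ w with hx₀
  have hEw : E *ᵥ w = v := by
    rw [hw, Matrix.mulVec_mulVec, hEF, Matrix.one_mulVec]
  have hXtv : Xᵀ *ᵥ x₀ = v := by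
    rw [hx₀, Matrix.mulVec_mulVec, hXX, hEw]
  have h1 : ∀ p, ∑ i, X i p ^ 2 = s p := by
    intro p
    have h := congrFun (congrFun hXX p) p
    rw [hs p]
    simpa [Matrix.mul_apply, pow_two] using h
  have h2 : ∀ p, ∑ i, X i p * x₀ i = v p := by
    intro p
    have h := congrFun hXtv p
    simpa [mulVec, dotProduct] using h
  have hb' : ∑ p, ∑ q, F p q * s q = b := by
    calc ∑ p, ∑ q, F p q * s q = ∑ q, ∑ p, F p q * s q := Finset.sum_comm
      _ = ∑ q, ∑ p, s q * F q p :=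
          Finset.sum_congr rfl fun q _ => Finset.sum_congr rfl fun p _ => by
            rw [hFsym p q]; ring
      _ = b := hb.symm
  have h4 : v ⬝ᵥ (F *ᵥ v) = (c + 2 * α * b + α ^ 2 * a) / 4 := by
    have expand : v ⬝ᵥ (F *ᵥ v) =
        ∑ p, ∑ q, (s p * F p q * s q / 4 + α * (s p * F p q) / 4
          + α * (F p q * s q) / 4 + α ^ 2 * F p q / 4) := by
      simp only [dotProduct, mulVec, Finset.mul_sum]
      refine Finset.sum_congr rfl fun p _ => Finset.sum_congr rfl fun q _ => ?_
      simp only [hv]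
      ring
    rw [expand]
    simp only [Finset.sum_add_distrib, ← Finset.sum_div, ← Finset.mul_sum]
    have hbb : ∑ i, s i * ∑ j, F i j = b := by
      rw [hb]; exact Finset.sum_congr rfl fun i _ => Finset.mul_sum _ _ _
    rw [← hc, hb', hbb, ← ha]
    ring
  have h3 : ∑ i, x₀ i ^ 2 = (c + 2 * α * b + α ^ 2 * a) / 4 := by
    have e1 : x₀ ⬝ᵥ x₀ = v ⬝ᵥ (F *ᵥ v) := by
      conv_lhs => rw [hx₀]
      rw [show x₀ ⬝ᵥ (X *ᵥ w) = (x₀ ᵥ* X) ⬝ᵥ w from Matrix.dotProduct_mulVec _ _ _,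
        ← Matrix.mulVec_transpose, hXtv, hw]
    rw [← h4, ← e1]
    simp [dotProduct, pow_two]
  have hmain : ∀ p, ∑ i, (X i p - x₀ i) ^ 2 = (c - (2 - b) ^ 2 / a) / 4 := by
    intro p
    have step : ∑ i, (X i p - x₀ i) ^ 2
        = (∑ i, X i p ^ 2) - 2 * (∑ i, X i p * x₀ i) + ∑ i, x₀ i ^ 2 := by
      rw [Finset.mul_sum, ← Finset.sum_sub_distrib, ← Finset.sum_add_distrib]
      exact Finset.sum_congr rfl fun i _ => by ring
    rw [step, h1, h2, h3, hv]
    simp only [hα]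
    field_simp
    ring
  refine ⟨hapos, ?_, ⟨x₀, hmain⟩⟩
  rw [← hmain (Classical.arbitrary (Fin n))]
  positivity
end

section
/- Let P_n be the path graph with vertices 1, …, n and adjacency matrix A. Then for every pair of vertices p, q, the communicability satisfies (e^A)_{pq} = (1/(n+1)) Σ_{j=1}^{n} [ cos(jπ(p−q)/(n+1)) − cos(jπ(p+q)/(n+1)) ] · e^{2 cos(jπ/(n+1))}. -/
open Matrix Real

/-- The adjacency matrix of the path graph `P_n`: the vertex `p ∈ {1, …, n}` is represented
by the index `p - 1 : Fin n`, and vertices are adjacent iff they are consecutive. -/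
def pathAdj (n : ℕ) : Matrix (Fin n) (Fin n) ℝ :=
  Matrix.of fun p q => if p.1 + 1 = q.1 ∨ q.1 + 1 = p.1 then 1 else 0


open Complex in
lemma aux_re_inv_one_sub (z : ℂ) (h1 : Complex.normSq z = 1) (h2 : z ≠ 1) :
    ((1 - z)⁻¹).re = 1 / 2 := by
  have hre : z.re ≠ 1 := by
    intro h
    apply h2
    have him : z.im = 0 := by
      have := h1
      rw [Complex.normSq_apply, h] at this
      nlinarith [sq_nonneg z.im]
    exact Complex.ext (by simp [h]) (by simp [him])
  have hns : Complex.normSq (1 - z) = 2 - 2 * z.re := by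
    rw [Complex.normSq_apply]
    simp only [Complex.sub_re, Complex.one_re, Complex.sub_im, Complex.one_im]
    have := h1
    rw [Complex.normSq_apply] at this
    nlinarith
  rw [Complex.inv_re, hns]
  simp only [Complex.sub_re, Complex.one_re]
  have h3 : (1 : ℝ) - z.re ≠ 0 := sub_ne_zero.mpr (Ne.symm hre)
  have hne : (2:ℝ) - 2 * z.re ≠ 0 := by intro h; apply h3; linarith
  rw [div_eq_div_iff hne two_ne_zero]
  ring

open Real

lemma aux_sum_cos (n : ℕ) (k : ℤ) (h : ¬ ((2*((n:ℤ)+1)) ∣ k)) :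
    ∑ j : Fin n, Real.cos ((k:ℝ) * ((j.1:ℝ)+1) * Real.pi / ((n:ℝ)+1))
      = if Even k then -1 else 0 := by
  have hc0 : ((n:ℝ)+1) ≠ 0 := by positivity
  set θ : ℝ := (k:ℝ) * Real.pi / ((n:ℝ)+1) with hθ
  set z : ℂ := Complex.exp (θ * Complex.I) with hz
  have hzpow : ∀ m : ℕ, z ^ m = Complex.exp (((m * θ : ℝ) : ℂ) * Complex.I) := by
    intro m
    rw [← Complex.exp_nat_mul]
    congr 1; push_cast; ring
  have hzre : ∀ m : ℕ, (z ^ m).re = Real.cos (m * θ) := by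
    intro m; rw [hzpow m, Complex.exp_ofReal_mul_I_re]
  have hz1 : z ≠ 1 := by
    intro hz1
    rw [hz, Complex.exp_eq_one_iff] at hz1
    obtain ⟨m, hm⟩ := hz1
    have him : θ = (m:ℝ) * (2 * Real.pi) := by
      have h' := congrArg Complex.im hm
      push_cast at h'
      simpa using h'
    rw [hθ] at him
    have hπ := Real.pi_ne_zero
    have hk : (k:ℝ) = 2 * ((n:ℝ)+1) * (m:ℝ) := by
      field_simp at him
      have h2 : (k:ℝ) * π = (2 * ((n:ℝ)+1) * (m:ℝ)) * π := by linear_combination π * him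
      exact mul_right_cancel₀ hπ h2
    have hkz : k = 2 * ((n:ℤ)+1) * m := by exact_mod_cast hk
    exact h ⟨m, hkz⟩
  have hns : Complex.normSq z = 1 := by
    rw [Complex.normSq_eq_norm_sq, hz, Complex.norm_exp_ofReal_mul_I]
    norm_num
  have hzn : z ^ (n+1) = (-1 : ℂ) ^ k := by
    rw [hzpow]
    have harg : ((n+1 : ℕ) : ℝ) * θ = (k:ℝ) * Real.pi := by
      rw [hθ]; push_cast; field_simp
    rw [harg, show (((k:ℝ) * Real.pi : ℝ) : ℂ) * Complex.I
        = (k:ℂ) * ((Real.pi : ℂ) * Complex.I) by push_cast; ring,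
      Complex.exp_int_mul, Complex.exp_pi_mul_I]
  have hsum : ∑ j : Fin n, Real.cos ((k:ℝ) * ((j.1:ℝ)+1) * Real.pi / ((n:ℝ)+1))
      = (∑ j ∈ Finset.range n, z ^ (j+1)).re := by
    rw [Complex.re_sum]
    rw [Fin.sum_univ_eq_sum_range (fun i => Real.cos ((k:ℝ) * ((i:ℝ)+1) * Real.pi / ((n:ℝ)+1)))]
    refine Finset.sum_congr rfl fun i _ => ?_
    rw [hzre]
    congr 1
    rw [hθ]; push_cast; ring
  have hG : ∑ i ∈ Finset.range (n+1), z ^ i = (z ^ (n+1) - 1) / (z - 1) :=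
    geom_sum_eq hz1 (n+1)
  have hT : ∑ j ∈ Finset.range n, z ^ (j+1)
      = (z ^ (n+1) - 1) / (z - 1) - 1 := by
    rw [← hG, Finset.sum_range_succ']
    simp
  rw [hsum, hT, hzn]
  rcases Int.even_or_odd k with he | ho
  · rw [he.neg_one_zpow, if_pos he]
    simp
  · rw [ho.neg_one_zpow, if_neg (Int.not_even_iff_odd.mpr ho)]
    have : ((-1 : ℂ) - 1) / (z - 1) = 2 * (1 - z)⁻¹ := by
      rw [show z - 1 = -(1 - z) by ring, div_neg, div_eq_mul_inv]
      ring
    rw [this]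
    have hre := aux_re_inv_one_sub z hns hz1
    simp [Complex.sub_re, Complex.mul_re, hre]

open Real

lemma aux_not_dvd {d k : ℤ} (hd : 0 < d) (h0 : k ≠ 0) (h1 : -d < k) (h2 : k < d) :
    ¬ d ∣ k := by
  rintro ⟨t, rfl⟩
  rcases lt_trichotomy t 0 with h | h | h
  · nlinarith
  · simp [h] at h0
  · nlinarith

noncomputable def pathS (n : ℕ) : Matrix (Fin n) (Fin n) ℝ :=
  Matrix.of fun p j => Real.sin (((p.1:ℝ)+1) * ((j.1:ℝ)+1) * Real.pi / ((n:ℝ)+1))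

lemma pathS_mul_self (n : ℕ) :
    pathS n * pathS n = (((n:ℝ)+1)/2) • (1 : Matrix (Fin n) (Fin n) ℝ) := by
  have hc0 : ((n:ℝ)+1) ≠ 0 := by positivity
  ext p q
  rw [Matrix.mul_apply]
  set k1 : ℤ := (p.1 : ℤ) - q.1 with hk1
  set k2 : ℤ := (p.1 : ℤ) + q.1 + 2 with hk2
  have key : ∀ j : Fin n, pathS n p j * pathS n j q
      = (Real.cos ((k1:ℝ) * ((j.1:ℝ)+1) * Real.pi / ((n:ℝ)+1))
        - Real.cos ((k2:ℝ) * ((j.1:ℝ)+1) * Real.pi / ((n:ℝ)+1))) / 2 := by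
    intro j
    show Real.sin (((p.1:ℝ)+1) * ((j.1:ℝ)+1) * Real.pi / ((n:ℝ)+1))
        * Real.sin (((j.1:ℝ)+1) * ((q.1:ℝ)+1) * Real.pi / ((n:ℝ)+1)) = _
    rw [show (k1:ℝ) * ((j.1:ℝ)+1) * Real.pi / ((n:ℝ)+1)
        = ((p.1:ℝ)+1) * ((j.1:ℝ)+1) * Real.pi / ((n:ℝ)+1)
          - ((j.1:ℝ)+1) * ((q.1:ℝ)+1) * Real.pi / ((n:ℝ)+1) by
        rw [hk1]; push_cast; ring,
      show (k2:ℝ) * ((j.1:ℝ)+1) * Real.pi / ((n:ℝ)+1)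
        = ((p.1:ℝ)+1) * ((j.1:ℝ)+1) * Real.pi / ((n:ℝ)+1)
          + ((j.1:ℝ)+1) * ((q.1:ℝ)+1) * Real.pi / ((n:ℝ)+1) by
        rw [hk2]; push_cast; ring,
      Real.cos_sub, Real.cos_add]
    ring
  rw [Finset.sum_congr rfl (fun j _ => key j), ← Finset.sum_div, Finset.sum_sub_distrib]
  by_cases hpq : p = q
  · subst hpq
    have h1 : ∑ j : Fin n, Real.cos ((k1:ℝ) * ((j.1:ℝ)+1) * Real.pi / ((n:ℝ)+1)) = n := by
      have : k1 = 0 := by rw [hk1]; ring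
      rw [this]
      simp
    have h2 : ∑ j : Fin n, Real.cos ((k2:ℝ) * ((j.1:ℝ)+1) * Real.pi / ((n:ℝ)+1)) = -1 := by
      rw [aux_sum_cos n k2 (aux_not_dvd (by positivity) (by omega)
        (by have := p.2; omega) (by have := p.2; omega))]
      rw [if_pos (by rw [hk2]; exact ⟨(p.1:ℤ)+1, by ring⟩)]
    rw [h1, h2, Matrix.smul_apply, Matrix.one_apply_eq, smul_eq_mul]
    ring
  · have hne : (p.1 : ℤ) ≠ q.1 := by
      intro h; exact hpq (Fin.ext (by exact_mod_cast h))
    have hb1 := p.2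
    have hb2 := q.2
    have h1 := aux_sum_cos n k1 (aux_not_dvd (by positivity) (by omega) (by omega) (by omega))
    have h2 := aux_sum_cos n k2 (aux_not_dvd (by positivity) (by omega) (by omega) (by omega))
    have hpar : Even k1 ↔ Even k2 := by
      constructor
      · rintro ⟨t, ht⟩; exact ⟨t + q.1 + 1, by omega⟩
      · rintro ⟨t, ht⟩; exact ⟨t - q.1 - 1, by omega⟩
    rw [h1, h2, Matrix.smul_apply, Matrix.one_apply_ne hpq, smul_eq_mul]
    by_cases he : Even k1
    · rw [if_pos he, if_pos (hpar.mp he)]; ring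
    · rw [if_neg he, if_neg (fun h => he (hpar.mpr h))]; ring

lemma pathAdj_mul_pathS (n : ℕ) :
    pathAdj n * pathS n = pathS n * Matrix.diagonal
      (fun j : Fin n => 2 * Real.cos (((j.1:ℝ)+1) * Real.pi / ((n:ℝ)+1))) := by
  have hc0 : ((n:ℝ)+1) ≠ 0 := by positivity
  ext p j
  rw [Matrix.mul_apply, Matrix.mul_diagonal]
  set f : ℕ → ℝ := fun m => Real.sin ((m:ℝ) * ((j.1:ℝ)+1) * Real.pi / ((n:ℝ)+1)) with hf
  have hf0 : f 0 = 0 := by simp [hf]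
  have hfn : f (n+1) = 0 := by
    rw [hf]
    have : ((n+1 : ℕ) : ℝ) * ((j.1:ℝ)+1) * Real.pi / ((n:ℝ)+1)
        = ((j.1 + 1 : ℕ) : ℝ) * Real.pi := by push_cast; field_simp
    simp only [this, Real.sin_nat_mul_pi]
  have hSf : ∀ q : Fin n, pathS n q j = f (q.1 + 1) := by
    intro q; rw [hf]; show Real.sin _ = _; congr 1; push_cast; ring
  have hsplit : ∑ q : Fin n, pathAdj n p q * pathS n q j
      = (∑ q : Fin n, (if p.1 + 1 = q.1 then (1:ℝ) else 0) * f (q.1+1))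
        + ∑ q : Fin n, (if q.1 + 1 = p.1 then (1:ℝ) else 0) * f (q.1+1) := by
    rw [← Finset.sum_add_distrib]
    refine Finset.sum_congr rfl fun q _ => ?_
    rw [hSf q]
    show (if p.1 + 1 = q.1 ∨ q.1 + 1 = p.1 then (1:ℝ) else 0) * f (q.1+1) = _
    by_cases h1 : p.1 + 1 = q.1
    · have h2 : ¬ (q.1 + 1 = p.1) := by omega
      rw [if_pos (Or.inl h1), if_pos h1, if_neg h2]; ring
    · by_cases h2 : q.1 + 1 = p.1
      · rw [if_pos (Or.inr h2), if_neg h1, if_pos h2]; ring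
      · rw [if_neg (by tauto), if_neg h1, if_neg h2]; ring
  have hsum1 : ∑ q : Fin n, (if p.1 + 1 = q.1 then (1:ℝ) else 0) * f (q.1+1)
      = f (p.1 + 2) := by
    by_cases h : p.1 + 1 < n
    · rw [Finset.sum_eq_single (⟨p.1+1, h⟩ : Fin n)]
      · simp
      · intro q _ hq
        rw [if_neg (fun hh => hq (Fin.ext hh.symm)), zero_mul]
      · intro hq; exact absurd (Finset.mem_univ _) hq
    · have hpn : p.1 + 1 = n := by have := p.2; omega
      rw [show p.1 + 2 = n + 1 by omega, hfn]
      refine Finset.sum_eq_zero fun q _ => ?_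
      rw [if_neg (fun hh => by have := q.2; omega), zero_mul]
  have hsum2 : ∑ q : Fin n, (if q.1 + 1 = p.1 then (1:ℝ) else 0) * f (q.1+1)
      = f p.1 := by
    by_cases h : 0 < p.1
    · have h' : p.1 - 1 < n := by have := p.2; omega
      rw [Finset.sum_eq_single (⟨p.1-1, h'⟩ : Fin n)]
      · rw [if_pos (by simp; omega), one_mul, show p.1 - 1 + 1 = p.1 by omega]
      · intro q _ hq
        rw [if_neg (fun hh => hq (Fin.ext (by simp; omega))), zero_mul]
      · intro hq; exact absurd (Finset.mem_univ _) hq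
    · have hp0 : p.1 = 0 := by omega
      rw [hp0, hf0]
      refine Finset.sum_eq_zero fun q _ => ?_
      rw [if_neg (by omega), zero_mul]
  rw [hsplit, hsum1, hsum2, hSf p]
  rw [hf]
  show Real.sin _ + Real.sin _ = Real.sin _ * _
  rw [show ((p.1:ℕ):ℝ) * ((j.1:ℝ)+1) * Real.pi / ((n:ℝ)+1)
      = (((p.1:ℕ)+1:ℕ):ℝ) * ((j.1:ℝ)+1) * Real.pi / ((n:ℝ)+1)
        - ((j.1:ℝ)+1) * Real.pi / ((n:ℝ)+1) by push_cast; ring,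
    show (((p.1+2:ℕ)):ℝ) * ((j.1:ℝ)+1) * Real.pi / ((n:ℝ)+1)
      = (((p.1:ℕ)+1:ℕ):ℝ) * ((j.1:ℝ)+1) * Real.pi / ((n:ℝ)+1)
        + ((j.1:ℝ)+1) * Real.pi / ((n:ℝ)+1) by push_cast; ring,
    Real.sin_sub, Real.sin_add]
  ring
/-- For the path graph `P_n` with adjacency matrix `A`, the communicability
between vertices `p, q ∈ {1, …, n}` (represented by indices `p - 1, q - 1 : Fin n`) is
`(e^A)_{pq} = (1/(n+1)) Σ_{j=1}^{n} [cos(jπ(p−q)/(n+1)) − cos(jπ(p+q)/(n+1))]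
  e^{2 cos(jπ/(n+1))}`. -/
theorem path_graph_communicability (n : ℕ) (p q : Fin n) :
    NormedSpace.exp (pathAdj n) p q
      = (1 / ((n : ℝ) + 1)) * ∑ j : Fin n,
          (Real.cos (((j.1 : ℝ) + 1) * Real.pi * (((p.1 : ℝ) + 1) - ((q.1 : ℝ) + 1)) / (n + 1))
            - Real.cos (((j.1 : ℝ) + 1) * Real.pi * (((p.1 : ℝ) + 1) + ((q.1 : ℝ) + 1)) / (n + 1)))
          * Real.exp (2 * Real.cos (((j.1 : ℝ) + 1) * Real.pi / (n + 1))) := by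
  have hc0 : ((n:ℝ)+1) ≠ 0 := by positivity
  set S := pathS n with hS
  set d : Fin n → ℝ := fun j => 2 * Real.cos (((j.1:ℝ)+1) * Real.pi / ((n:ℝ)+1)) with hd
  have hSinv : S * ((2/((n:ℝ)+1)) • S) = 1 := by
    rw [Matrix.mul_smul, pathS_mul_self, smul_smul,
      show (2/((n:ℝ)+1)) * (((n:ℝ)+1)/2) = 1 by field_simp, one_smul]
  have hUnit : IsUnit S := by
    have := invertibleOfRightInverse (h := hSinv)
    exact isUnit_of_invertible S
  have hSi : S⁻¹ = (2/((n:ℝ)+1)) • S := Matrix.inv_eq_right_inv hSinv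
  have hS1 : S * S⁻¹ = 1 := by rw [hSi]; exact hSinv
  have hA : pathAdj n = S * Matrix.diagonal d * S⁻¹ := by
    rw [← Matrix.mul_one (pathAdj n), ← hS1, ← Matrix.mul_assoc,
      pathAdj_mul_pathS, Matrix.mul_assoc]
  rw [hA, Matrix.exp_conj S (Matrix.diagonal d) hUnit, Matrix.exp_diagonal,
    Pi.exp_def, hSi]
  have hexp : ∀ j : Fin n, NormedSpace.exp (d j) = Real.exp (d j) := by
    intro j; rw [Real.exp_eq_exp_ℝ]
  rw [Matrix.mul_apply, Finset.mul_sum]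
  refine Finset.sum_congr rfl fun j _ => ?_
  rw [Matrix.mul_diagonal, Matrix.smul_apply, smul_eq_mul, hexp j]
  show Real.sin (((p.1:ℝ)+1) * ((j.1:ℝ)+1) * Real.pi / ((n:ℝ)+1)) * _
      * (2/((n:ℝ)+1) * Real.sin (((j.1:ℝ)+1) * ((q.1:ℝ)+1) * Real.pi / ((n:ℝ)+1))) = _
  rw [show ((j.1:ℝ)+1) * Real.pi * (((p.1:ℝ)+1) - ((q.1:ℝ)+1)) / ((n:ℝ)+1)
      = ((p.1:ℝ)+1) * ((j.1:ℝ)+1) * Real.pi / ((n:ℝ)+1)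
        - ((j.1:ℝ)+1) * ((q.1:ℝ)+1) * Real.pi / ((n:ℝ)+1) by ring,
    show ((j.1:ℝ)+1) * Real.pi * (((p.1:ℝ)+1) + ((q.1:ℝ)+1)) / ((n:ℝ)+1)
      = ((p.1:ℝ)+1) * ((j.1:ℝ)+1) * Real.pi / ((n:ℝ)+1)
        + ((j.1:ℝ)+1) * ((q.1:ℝ)+1) * Real.pi / ((n:ℝ)+1) by ring,
    Real.cos_sub, Real.cos_add]
  ring
end

section
/- For an integer k, let I_k(2) = Σ_{m=0}^{∞} 1/(m! · (m+|k|)!). Let P_n be the path graph with vertices 1, …, n and adjacency matrix A_n. Then for every fixed pair of positive integers p, q, the communicability converges as n → ∞: lim_{n→∞} (e^{A_n})_{pq} = I_{p−q}(2) − I_{p+q}(2). In particular, lim_{n→∞} (e^{A_n})_{pp} = I_0(2) − I_{2p}(2). -/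
open Matrix Filter Topology

/-- The modified Bessel function of the first kind evaluated at `2`:
`I_k(2) = Σ_{m=0}^{∞} 1/(m! (m+|k|)!)`. -/
noncomputable def besselI2 (k : ℤ) : ℝ :=
  ∑' m : ℕ, 1 / ((Nat.factorial m : ℝ) * (Nat.factorial (m + k.natAbs) : ℝ))

/-- The communicability `G_{pq} = (e^{A_n})_{pq}` of the path graph `P_n` between vertices
`p, q ∈ {1, …, n}` (junk value `0` if `p` or `q` is not a vertex of `P_n`). -/
noncomputable def pathComm (n p q : ℕ) : ℝ :=
  if hp : p - 1 < n then
    if hq : q - 1 < n then NormedSpace.exp (pathAdj n) ⟨p - 1, hp⟩ ⟨q - 1, hq⟩ else 0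
  else 0

noncomputable def Gaux (ℓ j : ℕ) : ℝ :=
  if (ℓ + j) % 2 = 0 then (Nat.choose ℓ ((ℓ + j) / 2) : ℝ) else 0

lemma Gaux_nonneg (ℓ j : ℕ) : 0 ≤ Gaux ℓ j := by
  unfold Gaux; split <;> positivity

lemma Gaux_le (ℓ j : ℕ) : Gaux ℓ j ≤ 2 ^ ℓ := by
  unfold Gaux; split
  · have h : Nat.choose ℓ ((ℓ + j) / 2) ≤ 2 ^ ℓ := by
      calc Nat.choose ℓ ((ℓ + j) / 2) ≤ ∑ i ∈ Finset.range (ℓ + 1), Nat.choose ℓ i := by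
            rcases le_or_gt ((ℓ + j) / 2) ℓ with h | h
            · exact Finset.single_le_sum (fun i _ => Nat.zero_le _)
                (Finset.mem_range.mpr (by omega))
            · simp [Nat.choose_eq_zero_of_lt h]
        _ = 2 ^ ℓ := Nat.sum_range_choose ℓ
    calc (Nat.choose ℓ ((ℓ + j) / 2) : ℝ) ≤ ((2 ^ ℓ : ℕ) : ℝ) := by exact_mod_cast h
      _ = 2 ^ ℓ := by push_cast; ring
  · positivity

lemma Gaux_pascal (ℓ j : ℕ) : Gaux (ℓ + 1) (j + 1) = Gaux ℓ j + Gaux ℓ (j + 2) := by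
  unfold Gaux
  rcases Nat.mod_two_eq_zero_or_one (ℓ + j) with h | h
  · have h0 : (ℓ + 1 + (j + 1)) % 2 = 0 := by omega
    have h2 : (ℓ + (j + 2)) % 2 = 0 := by omega
    rw [if_pos h0, if_pos h, if_pos h2]
    have hs : (ℓ + 1 + (j + 1)) / 2 = (ℓ + j) / 2 + 1 := by omega
    have hs2 : (ℓ + (j + 2)) / 2 = (ℓ + j) / 2 + 1 := by omega
    rw [hs, hs2]
    rw [show ℓ + 1 = ℓ + 1 from rfl, Nat.choose_succ_succ]
    push_cast; ring
  · have h0 : ¬ (ℓ + 1 + (j + 1)) % 2 = 0 := by omega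
    have h1 : ¬ (ℓ + j) % 2 = 0 := by omega
    have h2 : ¬ (ℓ + (j + 2)) % 2 = 0 := by omega
    rw [if_neg h0, if_neg h1, if_neg h2]; ring

lemma Gaux_zero_pascal (ℓ : ℕ) : Gaux (ℓ + 1) 0 = 2 * Gaux ℓ 1 := by
  unfold Gaux
  rcases Nat.mod_two_eq_zero_or_one ℓ with h | h
  · have h0 : ¬ (ℓ + 1 + 0) % 2 = 0 := by omega
    have h1 : ¬ (ℓ + 1) % 2 = 0 := by omega
    rw [if_neg h0, if_neg h1]; ring
  · obtain ⟨t, rfl⟩ : ∃ t, ℓ = 2 * t + 1 := ⟨ℓ / 2, by omega⟩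
    have h0 : (2 * t + 1 + 1 + 0) % 2 = 0 := by omega
    have h1 : (2 * t + 1 + 1) % 2 = 0 := by omega
    rw [if_pos h0, if_pos h1]
    have e0 : (2 * t + 1 + 1 + 0) / 2 = t + 1 := by omega
    have e1 : (2 * t + 1 + 1) / 2 = t + 1 := by omega
    simp only [e0, e1]
    have hsym : Nat.choose (2 * t + 1) t = Nat.choose (2 * t + 1) (t + 1) := by
      have := Nat.choose_symm (n := 2 * t + 1) (k := t + 1) (by omega)
      simpa [show 2 * t + 1 - (t + 1) = t by omega] using this
    rw [show (2 * t + 1 + 1) = (2 * t + 1) + 1 from rfl, Nat.choose_succ_succ, hsym]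
    push_cast; ring

lemma Gaux_zero (j : ℕ) : Gaux 0 j = if j = 0 then 1 else 0 := by
  unfold Gaux
  match j with
  | 0 => simp
  | 1 => norm_num
  | (j + 2) =>
    have : (0 + (j + 2)) / 2 = j / 2 + 1 := by omega
    rw [this]
    simp [Nat.choose]

noncomputable def Wk (a b ℓ : ℕ) : ℝ := Gaux ℓ ((b : ℤ) - a).natAbs - Gaux ℓ (a + b + 2)

lemma Wk_rec_zero (a ℓ : ℕ) : Wk a 0 (ℓ + 1) = Wk a 1 ℓ := by
  unfold Wk
  match a with
  | 0 =>
    simp only [Nat.cast_zero, sub_zero, Int.natAbs_zero, Int.natAbs_one]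
    rw [Gaux_zero_pascal, show (0 + 0 + 2) = 1 + 1 from rfl, Gaux_pascal]
    ring
  | (a + 1) =>
    simp only [Nat.cast_zero, Nat.cast_one]
    have e1 : ((0 : ℤ) - ((a + 1 : ℕ) : ℤ)).natAbs = a + 1 := by push_cast; omega
    have e2 : ((1 : ℤ) - ((a + 1 : ℕ) : ℤ)).natAbs = a := by push_cast; omega
    rw [e1, e2, Gaux_pascal, show (a + 1 + 0 + 2) = (a + 2) + 1 from rfl, Gaux_pascal,
      show a + 1 + 1 + 2 = (a + 2) + 2 from rfl]
    ring

lemma Wk_rec_succ (a b ℓ : ℕ) : Wk a (b + 1) (ℓ + 1) = Wk a b ℓ + Wk a (b + 2) ℓ := by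
  unfold Wk
  have h2 : Gaux (ℓ + 1) (a + (b + 1) + 2) = Gaux ℓ (a + b + 2) + Gaux ℓ (a + (b + 2) + 2) := by
    rw [show a + (b + 1) + 2 = (a + b + 2) + 1 from rfl, Gaux_pascal,
      show a + b + 2 + 2 = a + (b + 2) + 2 from rfl]
  have h1 : Gaux (ℓ + 1) ((b + 1 : ℕ) - (a : ℤ)).natAbs
      = Gaux ℓ ((b : ℤ) - a).natAbs + Gaux ℓ ((b + 2 : ℕ) - (a : ℤ)).natAbs := by
    rcases lt_trichotomy a (b + 1) with hc | hc | hc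
    · have e1 : ((b + 1 : ℕ) - (a : ℤ)).natAbs = (b - a) + 1 := by push_cast; omega
      have e2 : ((b : ℤ) - a).natAbs = b - a := by omega
      have e3 : ((b + 2 : ℕ) - (a : ℤ)).natAbs = (b - a) + 2 := by push_cast; omega
      rw [e1, e2, e3, Gaux_pascal]
    · have e1 : ((b + 1 : ℕ) - (a : ℤ)).natAbs = 0 := by push_cast; omega
      have e2 : ((b : ℤ) - a).natAbs = 1 := by omega
      have e3 : ((b + 2 : ℕ) - (a : ℤ)).natAbs = 1 := by push_cast; omega
      rw [e1, e2, e3, Gaux_zero_pascal]; ring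
    · have e1 : ((b + 1 : ℕ) - (a : ℤ)).natAbs = (a - b - 2) + 1 := by push_cast; omega
      have e2 : ((b : ℤ) - a).natAbs = (a - b - 2) + 2 := by omega
      have e3 : ((b + 2 : ℕ) - (a : ℤ)).natAbs = a - b - 2 := by push_cast; omega
      rw [e1, e2, e3, Gaux_pascal]; ring
  rw [h1, h2]; ring

lemma pathAdj_apply (n : ℕ) (r s : Fin n) :
    pathAdj n r s = if r.1 + 1 = s.1 ∨ s.1 + 1 = r.1 then 1 else 0 := rfl

lemma pathAdj_nonneg (n : ℕ) (r s : Fin n) : 0 ≤ pathAdj n r s := by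
  rw [pathAdj_apply]; split <;> norm_num

lemma sum_ite_unique {n : ℕ} (P : Fin n → Prop) [DecidablePred P]
    (h : ∀ x y, P x → P y → x = y) : (∑ r : Fin n, if P r then (1:ℝ) else 0) ≤ 1 := by
  rw [Finset.sum_boole]
  have hc : (Finset.univ.filter P).card ≤ 1 := by
    apply Finset.card_le_one.mpr
    intro x hx y hy
    simp only [Finset.mem_filter] at hx hy
    exact h x y hx.2 hy.2
  exact_mod_cast hc

lemma col_sum_le (n : ℕ) (b : Fin n) : ∑ r : Fin n, pathAdj n r b ≤ 2 := by
  have hle : ∀ r : Fin n, pathAdj n r b ≤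
      (if r.1 + 1 = b.1 then (1:ℝ) else 0) + (if b.1 + 1 = r.1 then (1:ℝ) else 0) := by
    intro r
    rw [pathAdj_apply]
    by_cases h1 : r.1 + 1 = b.1 <;> by_cases h2 : b.1 + 1 = r.1 <;>
      simp [h1, h2] <;> norm_num
  calc ∑ r : Fin n, pathAdj n r b
      ≤ ∑ r : Fin n, ((if r.1 + 1 = b.1 then (1:ℝ) else 0) + (if b.1 + 1 = r.1 then (1:ℝ) else 0)) :=
        Finset.sum_le_sum fun r _ => hle r
    _ = (∑ r : Fin n, if r.1 + 1 = b.1 then (1:ℝ) else 0)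
        + ∑ r : Fin n, if b.1 + 1 = r.1 then (1:ℝ) else 0 := Finset.sum_add_distrib
    _ ≤ 1 + 1 := by
        gcongr
        · exact sum_ite_unique _ fun x y hx hy => Fin.ext (by omega)
        · exact sum_ite_unique _ fun x y hx hy => Fin.ext (by omega)
    _ = 2 := by norm_num

lemma entry_bound (n : ℕ) : ∀ (ℓ : ℕ) (a b : Fin n), |((pathAdj n) ^ ℓ) a b| ≤ 2 ^ ℓ := by
  intro ℓ
  induction ℓ with
  | zero =>
    intro a b
    simp only [pow_zero, Matrix.one_apply]
    split <;> norm_num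
  | succ ℓ ih =>
    intro a b
    rw [pow_succ, Matrix.mul_apply]
    calc |∑ r : Fin n, ((pathAdj n) ^ ℓ) a r * pathAdj n r b|
        ≤ ∑ r : Fin n, |((pathAdj n) ^ ℓ) a r * pathAdj n r b| := Finset.abs_sum_le_sum_abs _ _
      _ ≤ ∑ r : Fin n, 2 ^ ℓ * pathAdj n r b := by
          apply Finset.sum_le_sum
          intro r _
          rw [abs_mul, abs_of_nonneg (pathAdj_nonneg n r b)]
          exact mul_le_mul_of_nonneg_right (ih a r) (pathAdj_nonneg n r b)
      _ = 2 ^ ℓ * ∑ r : Fin n, pathAdj n r b := by rw [Finset.mul_sum]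
      _ ≤ 2 ^ ℓ * 2 := by
          exact mul_le_mul_of_nonneg_left (col_sum_le n b) (by positivity)
      _ = 2 ^ (ℓ + 1) := by ring

lemma pow_entry_eq (n : ℕ) : ∀ (ℓ : ℕ) (a b : Fin n), b.1 + ℓ < n →
    ((pathAdj n) ^ ℓ) a b = Wk a.1 b.1 ℓ := by
  intro ℓ
  induction ℓ with
  | zero =>
    intro a b _
    simp only [pow_zero, Matrix.one_apply]
    unfold Wk
    rw [Gaux_zero]
    have h2 : Gaux 0 (a.1 + b.1 + 2) = 0 := by
      rw [Gaux_zero]; simp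
    rw [h2, sub_zero]
    by_cases h : a = b
    · subst h; simp
    · have : ¬ ((b.1 : ℤ) - a.1).natAbs = 0 := by
        have : a.1 ≠ b.1 := fun hc => h (Fin.ext hc)
        omega
      simp [h, this]
  | succ ℓ ih =>
    intro a b hb
    rw [pow_succ, Matrix.mul_apply]
    have hsplit : ∀ r : Fin n, ((pathAdj n) ^ ℓ) a r * pathAdj n r b
        = (if r.1 + 1 = b.1 then ((pathAdj n) ^ ℓ) a r else 0)
          + (if b.1 + 1 = r.1 then ((pathAdj n) ^ ℓ) a r else 0) := by
      intro r
      rw [pathAdj_apply]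
      by_cases h1 : r.1 + 1 = b.1 <;> by_cases h2 : b.1 + 1 = r.1
      · omega
      · simp [h1, h2]
      · simp [h1, h2]
      · simp [h1, h2]
    rw [Finset.sum_congr rfl fun r _ => hsplit r, Finset.sum_add_distrib]
    have hb1 : b.1 + 1 < n := by omega
    let rb : Fin n := ⟨b.1 + 1, hb1⟩
    have hS2 : (∑ r : Fin n, if b.1 + 1 = r.1 then ((pathAdj n) ^ ℓ) a r else 0)
        = Wk a.1 (b.1 + 1) ℓ := by
      have hcond : ∀ r : Fin n, (b.1 + 1 = r.1) ↔ (r = rb) := by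
        intro r
        constructor
        · intro h; exact Fin.ext h.symm
        · intro h; subst h; rfl
      calc (∑ r : Fin n, if b.1 + 1 = r.1 then ((pathAdj n) ^ ℓ) a r else 0)
          = ∑ r : Fin n, if r = rb then ((pathAdj n) ^ ℓ) a r else 0 := by
            apply Finset.sum_congr rfl
            intro r _
            exact if_congr (hcond r) rfl rfl
        _ = ((pathAdj n) ^ ℓ) a rb := by
            rw [Finset.sum_ite_eq' Finset.univ rb]
            simp
        _ = Wk a.1 (b.1 + 1) ℓ := ih a rb (by simp only [rb]; omega)
    rw [hS2]
    rcases Nat.eq_zero_or_eq_succ_pred b.1 with h0 | hsucc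
    · have hS1 : (∑ r : Fin n, if r.1 + 1 = b.1 then ((pathAdj n) ^ ℓ) a r else 0) = 0 := by
        apply Finset.sum_eq_zero
        intro r _
        rw [if_neg (by omega)]
      rw [hS1, h0, zero_add, Wk_rec_zero]
    · set c := b.1 - 1 with hc
      have hcn : c < n := by omega
      let rc : Fin n := ⟨c, hcn⟩
      have hS1 : (∑ r : Fin n, if r.1 + 1 = b.1 then ((pathAdj n) ^ ℓ) a r else 0)
          = Wk a.1 c ℓ := by
        have hcond : ∀ r : Fin n, (r.1 + 1 = b.1) ↔ (r = rc) := by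
          intro r
          constructor
          · intro h; exact Fin.ext (by simp only [rc]; omega)
          · intro h; subst h; simp only [rc]; omega
        calc (∑ r : Fin n, if r.1 + 1 = b.1 then ((pathAdj n) ^ ℓ) a r else 0)
            = ∑ r : Fin n, if r = rc then ((pathAdj n) ^ ℓ) a r else 0 := by
              apply Finset.sum_congr rfl
              intro r _
              exact if_congr (hcond r) rfl rfl
          _ = ((pathAdj n) ^ ℓ) a rc := by
              rw [Finset.sum_ite_eq' Finset.univ rc]
              simp
          _ = Wk a.1 c ℓ := ih a rc (by simp only [rc]; omega)
      rw [hS1]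
      have hb' : b.1 = c + 1 := by omega
      rw [hb', show c + 1 + 1 = c + 2 from rfl, Wk_rec_succ]

lemma entry_summable (n : ℕ) (a b : Fin n) :
    Summable (fun ℓ : ℕ => ((Nat.factorial ℓ : ℝ))⁻¹ * ((pathAdj n) ^ ℓ) a b) := by
  apply Summable.of_norm_bounded (Real.summable_pow_div_factorial 2)
  intro ℓ
  have h := entry_bound n ℓ a b
  have h0 : (0:ℝ) < (Nat.factorial ℓ : ℝ) := by positivity
  rw [Real.norm_eq_abs, abs_mul, abs_inv, abs_of_nonneg h0.le, div_eq_inv_mul]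
  exact mul_le_mul_of_nonneg_left h (by positivity)

lemma exp_entry (n : ℕ) (a b : Fin n) :
    NormedSpace.exp (pathAdj n) a b
      = ∑' ℓ : ℕ, ((Nat.factorial ℓ : ℝ))⁻¹ * ((pathAdj n) ^ ℓ) a b := by
  rw [NormedSpace.exp_eq_tsum (𝕂 := ℝ)]
  have hsum : Summable (fun ℓ : ℕ => ((Nat.factorial ℓ : ℝ))⁻¹ • (pathAdj n) ^ ℓ) := by
    apply Pi.summable.mpr
    intro i
    apply Pi.summable.mpr
    intro j
    have := entry_summable n i j
    simpa [Matrix.smul_apply, smul_eq_mul] using this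
  show (∑' ℓ : ℕ, ((Nat.factorial ℓ : ℝ))⁻¹ • (pathAdj n) ^ ℓ) a b = _
  erw [tsum_apply hsum, tsum_apply (Pi.summable.mp hsum a)]
  apply tsum_congr
  intro ℓ
  simp [Matrix.smul_apply, smul_eq_mul]

lemma Gaux_summable (j : ℕ) :
    Summable (fun ℓ : ℕ => ((Nat.factorial ℓ : ℝ))⁻¹ * Gaux ℓ j) := by
  apply Summable.of_norm_bounded (Real.summable_pow_div_factorial 2)
  intro ℓ
  have h0 : (0:ℝ) < (Nat.factorial ℓ : ℝ) := by positivity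
  rw [Real.norm_eq_abs, abs_mul, abs_inv, abs_of_nonneg h0.le,
    abs_of_nonneg (Gaux_nonneg ℓ j), div_eq_inv_mul]
  exact mul_le_mul_of_nonneg_left (Gaux_le ℓ j) (by positivity)

lemma tsum_Gaux (j : ℕ) :
    ∑' ℓ : ℕ, ((Nat.factorial ℓ : ℝ))⁻¹ * Gaux ℓ j
      = ∑' m : ℕ, 1 / ((Nat.factorial m : ℝ) * (Nat.factorial (m + j) : ℝ)) := by
  have hinj : Function.Injective (fun m : ℕ => 2 * m + j) := by
    intro x y h; dsimp only at h; omega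
  have hsupp : Function.support (fun ℓ : ℕ => ((Nat.factorial ℓ : ℝ))⁻¹ * Gaux ℓ j)
      ⊆ Set.range (fun m : ℕ => 2 * m + j) := by
    intro ℓ hℓ
    simp only [Function.mem_support] at hℓ
    by_contra hr
    apply hℓ
    have hnotform : ¬ ∃ m, ℓ = 2 * m + j := by
      rintro ⟨m, rfl⟩
      exact hr ⟨m, rfl⟩
    have : Gaux ℓ j = 0 := by
      unfold Gaux
      rcases Nat.mod_two_eq_zero_or_one (ℓ + j) with h | h
      · rw [if_pos h]
        have hlt : ℓ < j := by
          by_contra hge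
          exact hnotform ⟨(ℓ - j) / 2, by omega⟩
        have : ℓ < (ℓ + j) / 2 := by omega
        rw [Nat.choose_eq_zero_of_lt this]
        norm_num
      · rw [if_neg (by omega)]
    rw [this, mul_zero]
  have := hinj.tsum_eq (f := fun ℓ : ℕ => ((Nat.factorial ℓ : ℝ))⁻¹ * Gaux ℓ j) hsupp
  rw [← this]
  apply tsum_congr
  intro m
  have hpar : (2 * m + j + j) % 2 = 0 := by omega
  have hdiv : (2 * m + j + j) / 2 = m + j := by omega
  simp only [Gaux, hpar, if_pos, hdiv]
  have hch := Nat.choose_mul_factorial_mul_factorial (n := 2 * m + j) (k := m + j) (by omega)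
  have hsub : 2 * m + j - (m + j) = m := by omega
  rw [hsub] at hch
  have hne1 : (Nat.factorial (2 * m + j) : ℝ) ≠ 0 := by positivity
  have hne2 : (Nat.factorial (m + j) : ℝ) ≠ 0 := by positivity
  have hne3 : (Nat.factorial m : ℝ) ≠ 0 := by positivity
  have hchR : ((Nat.choose (2 * m + j) (m + j) : ℝ)) * (Nat.factorial (m + j) : ℝ)
      * (Nat.factorial m : ℝ) = (Nat.factorial (2 * m + j) : ℝ) := by
    exact_mod_cast congrArg (fun x : ℕ => (x : ℝ)) hch
  field_simp
  nlinarith [hchR]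

lemma core (p q : ℕ) (hp : 0 < p) (hq : 0 < q) :
    Tendsto (fun n => pathComm n p q) atTop
      (𝓝 (besselI2 ((p : ℤ) - (q : ℤ)) - besselI2 ((p : ℤ) + (q : ℤ)))) := by
  classical
  set F : ℕ → ℕ → ℝ := fun n ℓ =>
    if h : p - 1 < n ∧ q - 1 < n then
      ((Nat.factorial ℓ : ℝ))⁻¹ * ((pathAdj n) ^ ℓ) ⟨p - 1, h.1⟩ ⟨q - 1, h.2⟩ else 0
    with hF
  have hcomm : ∀ n, pathComm n p q = ∑' ℓ, F n ℓ := by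
    intro n
    by_cases h : p - 1 < n ∧ q - 1 < n
    · rw [pathComm, dif_pos h.1, dif_pos h.2, exp_entry]
      apply tsum_congr
      intro ℓ
      rw [hF]
      simp only [dif_pos h]
    · have hz : ∀ ℓ, F n ℓ = 0 := by
        intro ℓ; rw [hF]; simp only [dif_neg h]
      rw [tsum_congr hz, tsum_zero, pathComm]
      rcases Nat.lt_or_ge (p - 1) n with h1 | h1
      · rcases Nat.lt_or_ge (q - 1) n with h2 | h2
        · exact absurd ⟨h1, h2⟩ h
        · rw [dif_pos h1, dif_neg (by omega)]
      · rw [dif_neg (by omega)]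
  have hlim : ∀ ℓ, Tendsto (fun n => F n ℓ) atTop
      (𝓝 (((Nat.factorial ℓ : ℝ))⁻¹ * Wk (p - 1) (q - 1) ℓ)) := by
    intro ℓ
    apply Tendsto.congr' _ (tendsto_const_nhds
      (x := ((Nat.factorial ℓ : ℝ))⁻¹ * Wk (p - 1) (q - 1) ℓ))
    filter_upwards [eventually_ge_atTop (p + q + ℓ)] with n hn
    have h : p - 1 < n ∧ q - 1 < n := by omega
    rw [hF]
    simp only [dif_pos h]
    rw [pow_entry_eq n ℓ ⟨p - 1, h.1⟩ ⟨q - 1, h.2⟩ (by simp only []; omega)]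
  have hbound : ∀ n, ∀ ℓ, ‖F n ℓ‖ ≤ (2 : ℝ) ^ ℓ / Nat.factorial ℓ := by
    intro n ℓ
    rw [hF]
    by_cases h : p - 1 < n ∧ q - 1 < n
    · simp only [dif_pos h]
      have h0 : (0:ℝ) < (Nat.factorial ℓ : ℝ) := by positivity
      rw [Real.norm_eq_abs, abs_mul, abs_inv, abs_of_nonneg h0.le, div_eq_inv_mul]
      exact mul_le_mul_of_nonneg_left (entry_bound n ℓ _ _) (by positivity)
    · simp only [dif_neg h, norm_zero]
      positivity
  have htend := tendsto_tsum_of_dominated_convergence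
    (f := F) (g := fun ℓ => ((Nat.factorial ℓ : ℝ))⁻¹ * Wk (p - 1) (q - 1) ℓ)
    (bound := fun ℓ => (2 : ℝ) ^ ℓ / Nat.factorial ℓ)
    (Real.summable_pow_div_factorial 2) hlim (Eventually.of_forall hbound)
  have hval : ∑' ℓ, ((Nat.factorial ℓ : ℝ))⁻¹ * Wk (p - 1) (q - 1) ℓ
      = besselI2 ((p : ℤ) - (q : ℤ)) - besselI2 ((p : ℤ) + (q : ℤ)) := by
    have hj1 : (((q - 1 : ℕ) : ℤ) - ((p - 1 : ℕ) : ℤ)).natAbs = ((p : ℤ) - q).natAbs := by omega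
    have hj2 : (p - 1) + (q - 1) + 2 = ((p : ℤ) + q).natAbs := by omega
    calc ∑' ℓ, ((Nat.factorial ℓ : ℝ))⁻¹ * Wk (p - 1) (q - 1) ℓ
        = ∑' ℓ, (((Nat.factorial ℓ : ℝ))⁻¹ * Gaux ℓ (((p : ℤ) - q).natAbs)
            - ((Nat.factorial ℓ : ℝ))⁻¹ * Gaux ℓ (((p : ℤ) + q).natAbs)) := by
          apply tsum_congr
          intro ℓ
          rw [Wk, hj1, hj2]
          ring
      _ = (∑' ℓ, ((Nat.factorial ℓ : ℝ))⁻¹ * Gaux ℓ (((p : ℤ) - q).natAbs))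
          - ∑' ℓ, ((Nat.factorial ℓ : ℝ))⁻¹ * Gaux ℓ (((p : ℤ) + q).natAbs) :=
          Summable.tsum_sub (Gaux_summable _) (Gaux_summable _)
      _ = besselI2 ((p : ℤ) - (q : ℤ)) - besselI2 ((p : ℤ) + (q : ℤ)) := by
          rw [tsum_Gaux, tsum_Gaux, besselI2, besselI2]
  rw [← hval]
  exact htend.congr (fun n => (hcomm n).symm)


/-- For fixed vertices `p, q ≥ 1` the communicability of the path graph
`P_n` converges as `n → ∞`: `lim_{n→∞} (e^{A_n})_{pq} = I_{p−q}(2) − I_{p+q}(2)`; in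
particular `lim_{n→∞} (e^{A_n})_{pp} = I_0(2) − I_{2p}(2)`. -/
theorem path_graph_communicability_limit (p q : ℕ) (hp : 0 < p) (hq : 0 < q) :
    Tendsto (fun n => pathComm n p q) atTop
      (𝓝 (besselI2 ((p : ℤ) - (q : ℤ)) - besselI2 ((p : ℤ) + (q : ℤ)))) ∧
    Tendsto (fun n => pathComm n p p) atTop
      (𝓝 (besselI2 0 - besselI2 (2 * (p : ℤ)))) := by
  refine ⟨core p q hp hq, ?_⟩
  have h := core p p hp hp
  have e1 : (p : ℤ) - (p : ℤ) = 0 := by ring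
  have e2 : (p : ℤ) + (p : ℤ) = 2 * (p : ℤ) := by ring
  rwa [e1, e2] at h
end

section
/- For an integer k, let I_k(2) = Σ_{m=0}^{∞} 1/(m! · (m+|k|)!). Define, for each integer q ≥ 2, c(q) = (I_{q−1}(2) − I_{q+1}(2)) / √( (I_0(2) + I_2(2)) · (I_0(2) − I_{2q}(2)) ) (the n → ∞ limit of the cosine of the communicability angle between vertex 1 and vertex q in the path graph P_n). Then the sequence (c(q))_{q≥2} is strictly decreasing and lim_{q→∞} c(q) = 0. -/
open Filter Topology

/-- The `n → ∞` limit of the cosine of the communicability angle between vertex `1` and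
vertex `q` of the path graph `P_n`:
`c(q) = (I_{q−1}(2) − I_{q+1}(2)) / √((I_0(2) + I_2(2))(I_0(2) − I_{2q}(2)))`. -/
noncomputable def pathCosLimit (q : ℕ) : ℝ :=
  (besselI2 ((q : ℤ) - 1) - besselI2 ((q : ℤ) + 1))
    / Real.sqrt ((besselI2 0 + besselI2 2) * (besselI2 0 - besselI2 (2 * (q : ℤ))))

/- Auxiliary development -/

noncomputable def Jf (k m : ℕ) : ℝ := 1 / ((Nat.factorial m : ℝ) * (Nat.factorial (m + k) : ℝ))
noncomputable def J (k : ℕ) : ℝ := ∑' m, Jf k m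

lemma besselI2_eq (k : ℤ) : besselI2 k = J k.natAbs := rfl

lemma Jf_pos (k m : ℕ) : 0 < Jf k m := by unfold Jf; positivity

lemma summable_one_div_fact : Summable (fun m : ℕ => 1 / (Nat.factorial m : ℝ)) := by
  simpa using Real.summable_pow_div_factorial 1

lemma summable_Jf (k : ℕ) : Summable (Jf k) := by
  refine Summable.of_nonneg_of_le (fun m => (Jf_pos k m).le) ?_ summable_one_div_fact
  intro m
  unfold Jf
  rw [div_le_div_iff₀ (by positivity) (by positivity)]
  have h1 : (1:ℝ) ≤ (Nat.factorial (m+k) : ℝ) := by exact_mod_cast (Nat.factorial_pos (m+k))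
  nlinarith [Nat.cast_pos (α := ℝ) |>.mpr (Nat.factorial_pos m)]

lemma J_pos (k : ℕ) : 0 < J k :=
  Summable.tsum_pos (summable_Jf k) (fun m => (Jf_pos k m).le) 0 (Jf_pos k 0)

lemma Jf_anti {k l : ℕ} (h : k ≤ l) (m : ℕ) : Jf l m ≤ Jf k m := by
  unfold Jf
  gcongr

lemma J_strict_anti {k l : ℕ} (h : k < l) : J l < J k := by
  refine Summable.tsum_lt_tsum (i := 1) (fun m => Jf_anti h.le m) ?_ (summable_Jf l) (summable_Jf k)
  unfold Jf
  rw [div_lt_div_iff₀ (by positivity) (by positivity)]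
  simp only [Nat.factorial_one, Nat.cast_one, one_mul]
  exact_mod_cast (Nat.factorial_lt (by omega)).mpr (by omega)

lemma J_le (k : ℕ) : J k ≤ J 0 / (Nat.factorial k : ℝ) := by
  have hsum0 : Summable (fun m => Jf 0 m / (Nat.factorial k : ℝ)) :=
    (summable_Jf 0).div_const _
  calc J k ≤ ∑' m, Jf 0 m / (Nat.factorial k : ℝ) := by
        refine Summable.tsum_le_tsum (fun m => ?_) (summable_Jf k) hsum0
        unfold Jf
        rw [div_div]
        rw [div_le_div_iff₀ (by positivity) (by positivity)]
        have h2 : (Nat.factorial m : ℝ) * Nat.factorial k ≤ Nat.factorial (m + k) := by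
          exact_mod_cast Nat.le_of_dvd (Nat.factorial_pos _)
            (Nat.factorial_mul_factorial_dvd_factorial_add m k)
        have hm : (0:ℝ) < Nat.factorial m := by exact_mod_cast Nat.factorial_pos m
        simp only [Nat.add_zero]
        nlinarith
    _ = J 0 / (Nat.factorial k : ℝ) := by rw [tsum_div_const]; rfl

lemma J_tendsto : Tendsto J atTop (𝓝 0) := by
  have h1 : Tendsto (fun k : ℕ => J 0 / (Nat.factorial k : ℝ)) atTop (𝓝 0) := by
    apply Tendsto.div_atTop tendsto_const_nhds
    exact tendsto_natCast_atTop_atTop.comp factorial_tendsto_atTop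
  exact tendsto_of_tendsto_of_tendsto_of_le_of_le tendsto_const_nhds h1
    (fun k => (J_pos k).le) J_le

lemma fact_step (n : ℕ) (hn : 1 ≤ n) :
    1/((Nat.factorial (n+1) : ℝ)) + 1/(Nat.factorial (n+2)) <
    1/((Nat.factorial n : ℝ)) + 1/(Nat.factorial (n+3)) := by
  have e0 : (0:ℝ) < Nat.factorial n := by exact_mod_cast Nat.factorial_pos n
  have h1 : (2:ℝ) * Nat.factorial n ≤ Nat.factorial (n+1) := by
    exact_mod_cast Nat.mul_le_mul_right (Nat.factorial n) (by omega : 2 ≤ n+1) |>.trans_eq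
      (Nat.factorial_succ n).symm
  have h2 : (6:ℝ) * Nat.factorial n ≤ Nat.factorial (n+2) := by
    have : 6 * Nat.factorial n ≤ (n+2) * ((n+1) * Nat.factorial n) := by
      have h32 : 3 * (2 * Nat.factorial n) ≤ (n+2) * ((n+1) * Nat.factorial n) :=
        Nat.mul_le_mul (by omega) (Nat.mul_le_mul (by omega) (le_refl _))
      omega
    calc (6:ℝ) * Nat.factorial n ≤ ((n+2) * ((n+1) * Nat.factorial n) : ℕ) := by exact_mod_cast this
      _ = Nat.factorial (n+2) := by rw [Nat.factorial_succ (n+1), Nat.factorial_succ n]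
  have h3 : (0:ℝ) < Nat.factorial (n+3) := by exact_mod_cast Nat.factorial_pos (n+3)
  have b1 : 1/((Nat.factorial (n+1) : ℝ)) ≤ 1/(2 * Nat.factorial n) := by
    apply one_div_le_one_div_of_le (by positivity) h1
  have b2 : 1/((Nat.factorial (n+2) : ℝ)) ≤ 1/(6 * Nat.factorial n) := by
    apply one_div_le_one_div_of_le (by positivity) h2
  have : 1/(2 * (Nat.factorial n:ℝ)) + 1/(6 * Nat.factorial n) < 1/(Nat.factorial n) := by
    have heq : 1/(2 * (Nat.factorial n:ℝ)) + 1/(6 * Nat.factorial n)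
        = (2/3) * (1/(Nat.factorial n:ℝ)) := by field_simp; ring
    have hd : (0:ℝ) < 1/(Nat.factorial n:ℝ) := by positivity
    rw [heq]; linarith
  have hpos : (0:ℝ) < 1/(Nat.factorial (n+3)) := by positivity
  linarith

lemma key_lt (p m : ℕ) (hp : 1 ≤ p) :
    Jf (p+1) m - Jf (p+3) m < Jf p m - Jf (p+2) m := by
  unfold Jf
  have hm : (0:ℝ) < Nat.factorial m := by exact_mod_cast Nat.factorial_pos m
  have key := fact_step (m + p) (by omega)
  have e1 : m + (p+1) = (m+p) + 1 := by omega
  have e2 : m + (p+2) = (m+p) + 2 := by omega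
  have e3 : m + (p+3) = (m+p) + 3 := by omega
  rw [e1, e2, e3]
  have expand : ∀ a : ℕ, 1 / ((Nat.factorial m : ℝ) * Nat.factorial a)
      = (1 / (Nat.factorial m : ℝ)) * (1 / Nat.factorial a) := by
    intro a; rw [div_mul_div_comm, one_mul]
  rw [expand, expand, expand, expand, ← mul_sub, ← mul_sub]
  apply mul_lt_mul_of_pos_left _ (by positivity)
  linarith

/-- The numerator `J p − J (p+2)` is strictly decreasing in `p` for `p ≥ 1`. -/
lemma num_strict_anti (p : ℕ) (hp : 1 ≤ p) :
    J (p+1) - J (p+3) < J p - J (p+2) := by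
  have hs1 := summable_Jf (p+1)
  have hs3 := summable_Jf (p+3)
  have hs0 := summable_Jf p
  have hs2 := summable_Jf (p+2)
  rw [show J (p+1) - J (p+3) = ∑' m, (Jf (p+1) m - Jf (p+3) m) from (Summable.tsum_sub hs1 hs3).symm,
      show J p - J (p+2) = ∑' m, (Jf p m - Jf (p+2) m) from (Summable.tsum_sub hs0 hs2).symm]
  exact Summable.tsum_lt_tsum (i := 0) (fun m => (key_lt p m hp).le) (key_lt p 0 hp)
    (hs1.sub hs3) (hs0.sub hs2)

lemma num_pos (p : ℕ) : 0 < J p - J (p+2) :=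
  sub_pos.mpr (J_strict_anti (by omega))

/-- `pathCosLimit` in terms of `J`. -/
lemma pathCosLimit_eq (q : ℕ) (hq : 1 ≤ q) :
    pathCosLimit q = (J (q-1) - J (q+1))
      / Real.sqrt ((J 0 + J 2) * (J 0 - J (2*q))) := by
  unfold pathCosLimit
  rw [besselI2_eq, besselI2_eq, besselI2_eq, besselI2_eq, besselI2_eq]
  congr 3 <;> omega

noncomputable def D (q : ℕ) : ℝ := (J 0 + J 2) * (J 0 - J (2*q))

lemma D_pos (q : ℕ) (hq : 1 ≤ q) : 0 < D q := by
  unfold D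
  have h1 : 0 < J 0 + J 2 := by have := J_pos 0; have := J_pos 2; linarith
  have h2 : J (2*q) < J 0 := J_strict_anti (by omega)
  have h3 : 0 < J 0 - J (2*q) := by linarith
  positivity

lemma D_mono (q : ℕ) (hq : 1 ≤ q) : D q < D (q+1) := by
  unfold D
  have h1 : 0 < J 0 + J 2 := by have := J_pos 0; have := J_pos 2; linarith
  have h2 : J (2*(q+1)) < J (2*q) := J_strict_anti (by omega)
  nlinarith

/-- The sequence `(c(q))_{q ≥ 2}` is strictly decreasing and tends to `0`
as `q → ∞`. -/
theorem path_graph_cos_limit_monotone :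
    (∀ q : ℕ, 2 ≤ q → pathCosLimit (q + 1) < pathCosLimit q) ∧
    Tendsto pathCosLimit atTop (𝓝 0) := by
  constructor
  · intro q hq
    obtain ⟨p, rfl⟩ : ∃ p, q = p + 2 := ⟨q - 2, by omega⟩
    rw [pathCosLimit_eq (p+2) (by omega), pathCosLimit_eq (p+2+1) (by omega)]
    have hnum : J (p+2+1-1) - J (p+2+1+1) < J (p+2-1) - J (p+2+1) := by
      show J (p+2) - J (p+4) < J (p+1) - J (p+3)
      exact num_strict_anti (p+1) (by omega)
    have hnum1 : 0 < J (p+2+1-1) - J (p+2+1+1) := by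
      show (0:ℝ) < J (p+2) - J (p+4)
      exact num_pos (p+2)
    have hD : D (p+2) < D (p+2+1) := D_mono (p+2) (by omega)
    have hDq : 0 < D (p+2) := D_pos (p+2) (by omega)
    have hsq : Real.sqrt (D (p+2)) < Real.sqrt (D (p+2+1)) :=
      Real.sqrt_lt_sqrt hDq.le hD
    have hsqpos : 0 < Real.sqrt (D (p+2)) := Real.sqrt_pos.mpr hDq
    show (J (p+2+1-1) - J (p+2+1+1)) / Real.sqrt (D (p+2+1))
        < (J (p+2-1) - J (p+2+1)) / Real.sqrt (D (p+2))
    calc (J (p+2+1-1) - J (p+2+1+1)) / Real.sqrt (D (p+2+1))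
        < (J (p+2+1-1) - J (p+2+1+1)) / Real.sqrt (D (p+2)) := by
          gcongr
      _ < (J (p+2-1) - J (p+2+1)) / Real.sqrt (D (p+2)) := by gcongr
  · -- limit
    set C : ℝ := Real.sqrt (D 2) with hC
    have hCpos : 0 < C := Real.sqrt_pos.mpr (D_pos 2 (by omega))
    have hub : ∀ q : ℕ, 2 ≤ q → pathCosLimit q ≤ J (q-1) / C := by
      intro q hq
      rw [pathCosLimit_eq q (by omega)]
      have hDge : D 2 ≤ D q := by
        unfold D
        have h1 : 0 < J 0 + J 2 := by have := J_pos 0; have := J_pos 2; linarith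
        have h2 : J (2*q) ≤ J (2*2) := by
          rcases eq_or_lt_of_le hq with h | h
          · rw [← h]
          · exact (J_strict_anti (by omega)).le
        nlinarith
      have hsq : C ≤ Real.sqrt (D q) := by rw [hC]; exact Real.sqrt_le_sqrt hDge
      have hnum_le : J (q-1) - J (q+1) ≤ J (q-1) := by
        have := J_pos (q+1); linarith
      have hnum_nonneg : 0 ≤ J (q-1) - J (q+1) :=
        (sub_pos.mpr (J_strict_anti (by omega))).le
      have hDqsqrt : (0:ℝ) < Real.sqrt (D q) := Real.sqrt_pos.mpr (D_pos q (by omega))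
      show (J (q-1) - J (q+1)) / Real.sqrt (D q) ≤ J (q-1) / C
      calc (J (q-1) - J (q+1)) / Real.sqrt (D q)
          ≤ (J (q-1) - J (q+1)) / C := by gcongr
        _ ≤ J (q-1) / C := by gcongr
    have hlow : ∀ q : ℕ, 2 ≤ q → (0:ℝ) ≤ pathCosLimit q := by
      intro q hq
      rw [pathCosLimit_eq q (by omega)]
      have hnum_nonneg : 0 ≤ J (q-1) - J (q+1) :=
        (sub_pos.mpr (J_strict_anti (by omega))).le
      positivity
    have htop : Tendsto (fun q : ℕ => J (q-1) / C) atTop (𝓝 0) := by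
      have h1 : Tendsto (fun q : ℕ => J (q-1)) atTop (𝓝 0) :=
        J_tendsto.comp (tendsto_sub_atTop_nat 1)
      simpa using h1.div_const C
    exact tendsto_of_tendsto_of_tendsto_of_le_of_le' tendsto_const_nhds htop
      (eventually_atTop.2 ⟨2, hlow⟩) (eventually_atTop.2 ⟨2, hub⟩)
end

section
/- Let K_{1,n−1} be the star graph on n ≥ 3 vertices, with hub vertex 1 adjacent to each of the vertices 2, …, n and no other edges, and let A be its adjacency matrix. Then the entries of G = e^A are: G_{11} = cosh(√(n−1)); G_{1q} = G_{q1} = sinh(√(n−1))/√(n−1) for every q ≠ 1; G_{pp} = (cosh(√(n−1)) + n − 2)/(n−1) for every p ≠ 1; and G_{pq} = (cosh(√(n−1)) − 1)/(n−1) for all p ≠ q with p ≠ 1 and q ≠ 1. -/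
open Matrix Nat

/-- The adjacency matrix of the star graph `K_{1,n−1}` on vertex set `{1, …, n}` (vertex `p`
is represented by the index `p - 1 : Fin n`): the hub, vertex `1` (index `0`), is adjacent
to every other vertex and there are no other edges. -/
def starAdj (n : ℕ) : Matrix (Fin n) (Fin n) ℝ :=
  Matrix.of fun p q => if (p.1 = 0 ∧ q.1 ≠ 0) ∨ (q.1 = 0 ∧ p.1 ≠ 0) then 1 else 0

def starSq (n : ℕ) : Matrix (Fin n) (Fin n) ℝ :=
  Matrix.of fun p q =>
    if p.1 = 0 ∧ q.1 = 0 then (n : ℝ) - 1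
    else if p.1 ≠ 0 ∧ q.1 ≠ 0 then 1 else 0

lemma starAux_sum_eq (n : ℕ) (h0 : 0 < n) (c : ℝ) :
    ∑ x : Fin n, (if (x : ℕ) = 0 then c else 0) = c := by
  calc (∑ x : Fin n, if (x:ℕ) = 0 then c else 0)
      = ∑ x : Fin n, (if x = ⟨0, h0⟩ then c else 0) := by
        refine Finset.sum_congr rfl fun x _ => ?_
        by_cases h : (x : ℕ) = 0 <;> simp [h, Fin.ext_iff]
    _ = c := by rw [Finset.sum_ite_eq']; simp

lemma starAux_sum_ne (n : ℕ) (h0 : 0 < n) :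
    ∑ x : Fin n, (if (x : ℕ) = 0 then (0:ℝ) else 1) = (n : ℝ) - 1 := by
  have key : ∀ x : Fin n, (if (x : ℕ) = 0 then (0:ℝ) else 1)
      = 1 - (if x = ⟨0, h0⟩ then 1 else 0) := by
    intro x; by_cases h : (x : ℕ) = 0 <;> simp [h, Fin.ext_iff]
  simp only [key]
  rw [Finset.sum_sub_distrib, Finset.sum_const, Finset.sum_ite_eq']
  simp

lemma starAdj_sq (n : ℕ) (hn : 3 ≤ n) : starAdj n * starAdj n = starSq n := by
  have h0 : 0 < n := by omega
  ext p q
  rw [mul_apply]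
  simp only [starAdj, starSq, of_apply]
  by_cases hp : p.1 = 0 <;> by_cases hq : q.1 = 0 <;> simp [hp, hq]
  · rw [← starAux_sum_ne n h0]
    refine Finset.sum_congr rfl fun x _ => ?_
    by_cases h : (x : ℕ) = 0 <;> simp [h]
  · rw [Finset.sum_eq_zero]; intro x _; split <;> simp
  · rw [Finset.sum_eq_zero]; intro x _; split <;> simp
  · refine Eq.trans (Finset.sum_congr rfl fun x _ => ?_) (starAux_sum_eq n h0 1)
    by_cases h : (x : ℕ) = 0 <;> simp [h]

lemma starSq_mul (n : ℕ) (hn : 3 ≤ n) :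
    starSq n * starAdj n = ((n : ℝ) - 1) • starAdj n := by
  have h0 : 0 < n := by omega
  ext p q
  rw [mul_apply, Matrix.smul_apply]
  simp only [starAdj, starSq, of_apply, smul_eq_mul]
  by_cases hp : p.1 = 0 <;> by_cases hq : q.1 = 0 <;> simp [hp, hq]
  · rw [Finset.sum_eq_zero]; intro x _; split <;> simp
  · refine Eq.trans (Finset.sum_congr rfl fun x _ => ?_) (starAux_sum_eq n h0 ((n:ℝ)-1))
    by_cases h : (x : ℕ) = 0 <;> simp [h]
  · rw [← starAux_sum_ne n h0]
    refine Finset.sum_congr rfl fun x _ => ?_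
    by_cases h : (x : ℕ) = 0 <;> simp [h]
  · rw [Finset.sum_eq_zero]; intro x _; split <;> simp

lemma starAdj_pow_odd (n : ℕ) (hn : 3 ≤ n) (k : ℕ) :
    starAdj n ^ (2 * k + 1) = (((n : ℝ) - 1) ^ k) • starAdj n := by
  induction k with
  | zero => simp
  | succ k ih =>
    have h2 : 2 * (k + 1) + 1 = (2 * k + 1) + 2 := by ring
    rw [h2, pow_add, ih, pow_two, smul_mul_assoc, ← mul_assoc, starAdj_sq n hn,
      starSq_mul n hn, smul_smul, pow_succ]

lemma starAdj_pow_even (n : ℕ) (hn : 3 ≤ n) (k : ℕ) :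
    starAdj n ^ (2 * k + 2) = (((n : ℝ) - 1) ^ k) • starSq n := by
  have h : 2 * k + 2 = (2 * k + 1) + 1 := by ring
  rw [h, pow_succ, starAdj_pow_odd n hn, smul_mul_assoc, starAdj_sq n hn]

lemma star_exp (n : ℕ) (hn : 3 ≤ n) :
    NormedSpace.exp (starAdj n)
      = (Real.sinh (Real.sqrt ((n:ℝ)-1)) / Real.sqrt ((n:ℝ)-1)) • starAdj n
        + ((Real.cosh (Real.sqrt ((n:ℝ)-1)) - 1) / ((n:ℝ)-1)) • starSq n + 1 := by
  set s2 : ℝ := (n:ℝ) - 1 with hs2def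
  have hn3 : (3:ℝ) ≤ (n:ℝ) := by exact_mod_cast hn
  have hs2pos : 0 < s2 := by rw [hs2def]; linarith
  set s : ℝ := Real.sqrt s2 with hsdef
  have hspos : 0 < s := Real.sqrt_pos.mpr hs2pos
  have hssq : s ^ 2 = s2 := Real.sq_sqrt hs2pos.le
  have h1 : HasSum (fun k : ℕ => s2 ^ k / (2*k+1)!) (Real.sinh s / s) := by
    have h := (Real.hasSum_sinh s).div_const s
    have heq : (fun k : ℕ => s ^ (2*k+1) / (2*k+1)! / s) = fun k : ℕ => s2 ^ k / (2*k+1)! := by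
      funext k
      rw [pow_succ, pow_mul, hssq]
      field_simp
    rwa [heq] at h
  have hc' : HasSum (fun k : ℕ => s ^ (2*(k+1)) / (2*(k+1))!) (Real.cosh s - 1) := by
    refine (hasSum_nat_add_iff (f := fun k : ℕ => s ^ (2*k) / (2*k)!) 1).mpr ?_
    simpa using Real.hasSum_cosh s
  have h2 : HasSum (fun k : ℕ => s2 ^ k / (2*k+2)!) ((Real.cosh s - 1) / s2) := by
    have h := hc'.div_const s2
    have heq : (fun k : ℕ => s ^ (2*(k+1)) / (2*(k+1))! / s2)
        = fun k : ℕ => s2 ^ k / (2*k+2)! := by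
      funext k
      have hk : 2*(k+1) = 2*k+2 := by ring
      rw [hk, pow_add, pow_mul, hssq]
      field_simp
    rwa [heq] at h
  have hOdd : HasSum (fun k : ℕ => (((2*k+1)! : ℝ))⁻¹ • starAdj n ^ (2*k+1))
      ((Real.sinh s / s) • starAdj n) := by
    have h := h1.smul_const (starAdj n)
    have heq : (fun k : ℕ => (s2 ^ k / (2*k+1)!) • starAdj n)
        = fun k : ℕ => (((2*k+1)! : ℝ))⁻¹ • starAdj n ^ (2*k+1) := by
      funext k
      rw [starAdj_pow_odd n hn k, smul_smul, inv_mul_eq_div]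
    rwa [heq] at h
  have hEven : HasSum (fun k : ℕ => (((2*k+2)! : ℝ))⁻¹ • starAdj n ^ (2*k+2))
      (((Real.cosh s - 1) / s2) • starSq n) := by
    have h := h2.smul_const (starSq n)
    have heq : (fun k : ℕ => (s2 ^ k / (2*k+2)!) • starSq n)
        = fun k : ℕ => (((2*k+2)! : ℝ))⁻¹ • starAdj n ^ (2*k+2) := by
      funext k
      rw [starAdj_pow_even n hn k, smul_smul, inv_mul_eq_div]
    rwa [heq] at h
  have hShift : HasSum (fun k : ℕ => (((k+1)! : ℝ))⁻¹ • starAdj n ^ (k+1))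
      ((Real.sinh s / s) • starAdj n + ((Real.cosh s - 1) / s2) • starSq n) :=
    HasSum.even_add_odd hOdd hEven
  have hFull : HasSum (fun k : ℕ => ((k ! : ℝ))⁻¹ • starAdj n ^ k)
      ((Real.sinh s / s) • starAdj n + ((Real.cosh s - 1) / s2) • starSq n + 1) := by
    have h := (hasSum_nat_add_iff (f := fun k : ℕ => ((k ! : ℝ))⁻¹ • starAdj n ^ k) 1).mp hShift
    simpa using h
  rw [NormedSpace.exp_eq_tsum ℝ]
  exact hFull.tsum_eq

/-- For the star graph `K_{1,n−1}` on `n ≥ 3` vertices with hub vertex `1`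
(index `0`), the entries of `G = e^A` are: `G_{11} = cosh √(n−1)`;
`G_{1q} = G_{q1} = sinh(√(n−1))/√(n−1)` for `q ≠ 1`;
`G_{pp} = (cosh √(n−1) + n − 2)/(n−1)` for `p ≠ 1`; and
`G_{pq} = (cosh √(n−1) − 1)/(n−1)` for distinct `p, q ≠ 1`. -/
theorem star_graph_communicability (n : ℕ) (hn : 3 ≤ n) :
    (∀ p : Fin n, p.1 = 0 →
      NormedSpace.exp (starAdj n) p p = Real.cosh (Real.sqrt ((n : ℝ) - 1))) ∧
    (∀ p q : Fin n, p.1 = 0 → q.1 ≠ 0 →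
      NormedSpace.exp (starAdj n) p q
          = Real.sinh (Real.sqrt ((n : ℝ) - 1)) / Real.sqrt ((n : ℝ) - 1) ∧
      NormedSpace.exp (starAdj n) q p
          = Real.sinh (Real.sqrt ((n : ℝ) - 1)) / Real.sqrt ((n : ℝ) - 1)) ∧
    (∀ p : Fin n, p.1 ≠ 0 →
      NormedSpace.exp (starAdj n) p p
          = (Real.cosh (Real.sqrt ((n : ℝ) - 1)) + (n : ℝ) - 2) / ((n : ℝ) - 1)) ∧
    (∀ p q : Fin n, p.1 ≠ 0 → q.1 ≠ 0 → p ≠ q →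
      NormedSpace.exp (starAdj n) p q
          = (Real.cosh (Real.sqrt ((n : ℝ) - 1)) - 1) / ((n : ℝ) - 1)) := by
  have hn3 : (3:ℝ) ≤ (n:ℝ) := by exact_mod_cast hn
  have hs2 : ((n:ℝ) - 1) ≠ 0 := by linarith
  rw [star_exp n hn]
  set s : ℝ := Real.sqrt ((n:ℝ) - 1) with hsdef
  refine ⟨?_, ?_, ?_, ?_⟩
  · intro p hp
    simp [Matrix.add_apply, Matrix.smul_apply, one_apply, starAdj, starSq, hp, smul_eq_mul]
    field_simp
    ring
  · intro p q hp hq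
    have hpq : p ≠ q := fun h => hq (h ▸ hp)
    constructor <;>
      simp [Matrix.add_apply, Matrix.smul_apply, one_apply, starAdj, starSq, hp, hq, hpq, hpq.symm,
        smul_eq_mul]
  · intro p hp
    simp [Matrix.add_apply, Matrix.smul_apply, one_apply, starAdj, starSq, hp, smul_eq_mul]
    field_simp
    ring
  · intro p q hp hq hpq
    simp [Matrix.add_apply, Matrix.smul_apply, one_apply, starAdj, starSq, hp, hq, hpq, smul_eq_mul]
end

section
/- Let A be the adjacency matrix of a simple connected graph on n ≥ 2 vertices and, for β > 0, define cos θ_{pq}(β) = (e^{βA})_{pq} / √( (e^{βA})_{pp} (e^{βA})_{qq} ). Then for every pair of vertices p, q, lim_{β→∞} cos θ_{pq}(β) = 1; that is, as the inverse temperature tends to infinity every communicability angle tends to 0°. -/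
open Matrix Filter Topology Finset

section
variable {n : ℕ} {A : Matrix (Fin n) (Fin n) ℝ} (hA : A.IsHermitian)

theorem exp_smul_eq (β : ℝ) :
    NormedSpace.exp (β • A) =
      (hA.eigenvectorUnitary : Matrix (Fin n) (Fin n) ℝ)
        * diagonal (fun i => Real.exp (β * hA.eigenvalues i))
        * (hA.eigenvectorUnitary : Matrix (Fin n) (Fin n) ℝ)ᵀ := by
  have hVm : (hA.eigenvectorUnitary : Matrix (Fin n) (Fin n) ℝ)
      * star (hA.eigenvectorUnitary : Matrix (Fin n) (Fin n) ℝ) = 1 :=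
    Matrix.mem_unitaryGroup_iff.mp hA.eigenvectorUnitary.2
  have hinv : (hA.eigenvectorUnitary : Matrix (Fin n) (Fin n) ℝ)⁻¹
      = star (hA.eigenvectorUnitary : Matrix (Fin n) (Fin n) ℝ) :=
    Matrix.inv_eq_right_inv hVm
  have hiu : IsUnit (hA.eigenvectorUnitary : Matrix (Fin n) (Fin n) ℝ) := by
    have := invertibleOfRightInverse _ _ hVm
    exact isUnit_of_invertible _
  have hst : star (hA.eigenvectorUnitary : Matrix (Fin n) (Fin n) ℝ)
      = (hA.eigenvectorUnitary : Matrix (Fin n) (Fin n) ℝ)ᵀ := by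
    ext i j; simp [Matrix.star_apply]
  have h1 : β • A = (hA.eigenvectorUnitary : Matrix (Fin n) (Fin n) ℝ)
      * diagonal (fun i => β * hA.eigenvalues i)
      * (hA.eigenvectorUnitary : Matrix (Fin n) (Fin n) ℝ)⁻¹ := by
    rw [hinv]
    nth_rewrite 1 [hA.spectral_theorem, Unitary.conjStarAlgAut_apply]
    have hd : (diagonal fun i => β * hA.eigenvalues i)
        = β • diagonal (RCLike.ofReal ∘ hA.eigenvalues : Fin n → ℝ) := by
      rw [← Matrix.diagonal_smul]
      exact congrArg _ (funext fun i => by simp)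
    rw [hd, mul_smul_comm, smul_mul_assoc]
  rw [h1, Matrix.exp_conj _ _ hiu, Matrix.exp_diagonal, hinv, hst]
  have he : NormedSpace.exp (fun i => β * hA.eigenvalues i)
      = fun i => Real.exp (β * hA.eigenvalues i) :=
    funext fun i => by rw [Pi.coe_exp, ← Real.exp_eq_exp_ℝ]
  rw [he]
end


private lemma reach_ind {n : ℕ} {G : SimpleGraph (Fin n)} (P : Fin n → Prop)
    (hstep : ∀ a b, G.Adj a b → P a → P b) {a b : Fin n} (h : G.Reachable a b)
    (ha : P a) : P b := by
  obtain ⟨w⟩ := h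
  induction w with
  | nil => exact ha
  | cons h' _ ih => exact ih (hstep _ _ h' ha)

private lemma perron_core {n : ℕ} (G : SimpleGraph (Fin n)) [DecidableRel G.Adj]
    (hconn : G.Connected)
    (V : Matrix (Fin n) (Fin n) ℝ) (d : Fin n → ℝ)
    (hspec : G.adjMatrix ℝ = V * diagonal d * Vᵀ)
    (hVVt : V * Vᵀ = 1) (hVtV : Vᵀ * V = 1) :
    ∃ i₁ : Fin n, (∀ j, d j ≤ d i₁) ∧ (∀ j, d j = d i₁ → j = i₁) ∧
      (∀ x y, 0 < V x i₁ * V y i₁) := by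
  have : Nonempty (Fin n) := hconn.nonempty
  set A := G.adjMatrix ℝ with hAdef
  obtain ⟨i₁, -, hmax'⟩ := Finset.univ.exists_max_image d Finset.univ_nonempty
  have hmax : ∀ j, d j ≤ d i₁ := fun j => hmax' j (mem_univ j)
  have hAnn : ∀ a b, 0 ≤ A a b := by
    intro a b
    rw [hAdef, SimpleGraph.adjMatrix_apply]
    split_ifs <;> norm_num
  -- quadratic form in eigencoordinates
  have hquad : ∀ x : Fin n → ℝ,
      x ⬝ᵥ (A *ᵥ x) = ∑ i, d i * ((Vᵀ *ᵥ x) i) ^ 2 := by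
    intro x
    rw [hspec, ← Matrix.mulVec_mulVec, ← Matrix.mulVec_mulVec,
      Matrix.dotProduct_mulVec, ← Matrix.mulVec_transpose]
    simp only [dotProduct, Matrix.mulVec_diagonal]
    exact Finset.sum_congr rfl fun i _ => by ring
  have hnorm : ∀ x : Fin n → ℝ, x ⬝ᵥ x = ∑ i, ((Vᵀ *ᵥ x) i) ^ 2 := by
    intro x
    have h1 : (Vᵀ *ᵥ x) ⬝ᵥ (Vᵀ *ᵥ x) = x ⬝ᵥ x := by
      rw [Matrix.dotProduct_mulVec, Matrix.vecMul_transpose, Matrix.mulVec_mulVec,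
        hVVt, Matrix.one_mulVec]
    rw [← h1]
    simp only [dotProduct]
    exact Finset.sum_congr rfl fun i _ => by ring
  have hray : ∀ x : Fin n → ℝ, x ⬝ᵥ (A *ᵥ x) ≤ d i₁ * (x ⬝ᵥ x) := by
    intro x
    rw [hquad, hnorm, Finset.mul_sum]
    exact Finset.sum_le_sum fun i _ => mul_le_mul_of_nonneg_right (hmax i) (sq_nonneg _)
  have heigeq : ∀ x : Fin n → ℝ, x ⬝ᵥ (A *ᵥ x) = d i₁ * (x ⬝ᵥ x) → A *ᵥ x = d i₁ • x := by
    intro x hx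
    have h0 : ∑ i, (d i₁ - d i) * ((Vᵀ *ᵥ x) i) ^ 2 = 0 := by
      have h1 : ∑ i, (d i₁ - d i) * ((Vᵀ *ᵥ x) i) ^ 2
          = d i₁ * (x ⬝ᵥ x) - x ⬝ᵥ (A *ᵥ x) := by
        rw [hquad, hnorm, Finset.mul_sum, ← Finset.sum_sub_distrib]
        exact Finset.sum_congr rfl fun i _ => by ring
      rw [h1, hx, sub_self]
    have hterm : ∀ i, (d i₁ - d i) * ((Vᵀ *ᵥ x) i) ^ 2 = 0 := by
      intro i
      refine (Finset.sum_eq_zero_iff_of_nonneg fun j _ => ?_).1 h0 i (mem_univ i)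
      exact mul_nonneg (sub_nonneg.2 (hmax j)) (sq_nonneg _)
    have hDy : diagonal d *ᵥ (Vᵀ *ᵥ x) = d i₁ • (Vᵀ *ᵥ x) := by
      funext i
      rw [Matrix.mulVec_diagonal]
      rcases mul_eq_zero.1 (hterm i) with h | h
      · have : d i = d i₁ := by linarith
        rw [this]; rfl
      · have : (Vᵀ *ᵥ x) i = 0 := by
          exact sq_eq_zero_iff.mp h
        simp [this]
    calc A *ᵥ x = V *ᵥ (diagonal d *ᵥ (Vᵀ *ᵥ x)) := by
          rw [hspec, Matrix.mulVec_mulVec, Matrix.mulVec_mulVec]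
      _ = V *ᵥ (d i₁ • (Vᵀ *ᵥ x)) := by rw [hDy]
      _ = d i₁ • (V *ᵥ (Vᵀ *ᵥ x)) := by rw [Matrix.mulVec_smul]
      _ = d i₁ • x := by rw [Matrix.mulVec_mulVec, hVVt, Matrix.one_mulVec]
  have hquad2 : ∀ x : Fin n → ℝ,
      x ⬝ᵥ (A *ᵥ x) = ∑ a, ∑ b, A a b * (x a * x b) := by
    intro x
    simp only [dotProduct, Matrix.mulVec, dotProduct, Finset.mul_sum]
    exact Finset.sum_congr rfl fun a _ => Finset.sum_congr rfl fun b _ => by ring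
  -- eigenvector of |x|, and edge sign condition
  have habs : ∀ x : Fin n → ℝ, A *ᵥ x = d i₁ • x →
      (A *ᵥ (fun k => |x k|) = d i₁ • (fun k => |x k|)) ∧
        ∀ a b, G.Adj a b → x a * x b = |x a| * |x b| := by
    intro x hx
    have hxq : x ⬝ᵥ (A *ᵥ x) = d i₁ * (x ⬝ᵥ x) := by
      rw [hx]
      simp only [dotProduct, Pi.smul_apply, smul_eq_mul, Finset.mul_sum]
      exact Finset.sum_congr rfl fun i _ => by ring
    set w : Fin n → ℝ := fun k => |x k| with hw
    have hww : w ⬝ᵥ w = x ⬝ᵥ x := by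
      simp only [dotProduct, hw, abs_mul_abs_self]
    have hle : ∀ a b : Fin n, A a b * (x a * x b) ≤ A a b * (w a * w b) := by
      intro a b
      refine mul_le_mul_of_nonneg_left ?_ (hAnn a b)
      rw [hw, ← abs_mul]
      exact le_abs_self _
    have hge : x ⬝ᵥ (A *ᵥ x) ≤ w ⬝ᵥ (A *ᵥ w) := by
      rw [hquad2, hquad2]
      exact Finset.sum_le_sum fun a _ => Finset.sum_le_sum fun b _ => hle a b
    have heq : w ⬝ᵥ (A *ᵥ w) = d i₁ * (w ⬝ᵥ w) := by
      have h1 := hray w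
      rw [hww] at h1 ⊢
      rw [← hxq]
      linarith [hge, hxq]
    have hAw := heigeq w heq
    refine ⟨hAw, ?_⟩
    have hsum_eq : ∑ a, ∑ b, A a b * (x a * x b) = ∑ a, ∑ b, A a b * (w a * w b) := by
      rw [← hquad2, ← hquad2, hxq, heq, hww]
    have hflat : ∑ z ∈ Finset.univ ×ˢ Finset.univ, A z.1 z.2 * (x z.1 * x z.2)
        = ∑ z ∈ Finset.univ ×ˢ Finset.univ, A z.1 z.2 * (w z.1 * w z.2) := by
      rw [Finset.sum_product, Finset.sum_product]
      exact hsum_eq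
    have hpt := (Finset.sum_eq_sum_iff_of_le (fun z _ => hle z.1 z.2)).1 hflat
    intro a b hab
    have h1 : A a b = 1 := by rw [hAdef, SimpleGraph.adjMatrix_apply, if_pos hab]
    have h2 := hpt (a, b) (Finset.mem_product.2 ⟨mem_univ a, mem_univ b⟩)
    simpa [h1] using h2
  -- positivity of nonnegative eigenvectors
  have hpos : ∀ y : Fin n → ℝ, A *ᵥ y = d i₁ • y → (∀ k, 0 ≤ y k) → y ≠ 0 →
      ∀ k, 0 < y k := by
    intro y hy hnn hne k
    obtain ⟨k₀, hk₀⟩ : ∃ k₀, y k₀ ≠ 0 := by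
      by_contra h
      push_neg at h
      exact hne (funext fun k => h k)
    have hk₀pos : 0 < y k₀ := (hnn k₀).lt_of_ne (Ne.symm hk₀)
    have hstep : ∀ a b, G.Adj a b → 0 < y a → 0 < y b := by
      intro a b hab hya
      have h2 : 0 < (A *ᵥ y) b := by
        rw [Matrix.mulVec, dotProduct]
        refine Finset.sum_pos' (fun c _ => mul_nonneg (hAnn b c) (hnn c))
          ⟨a, Finset.mem_univ a, ?_⟩
        have h3 : A b a = 1 := by
          rw [hAdef, SimpleGraph.adjMatrix_apply, if_pos hab.symm]
        rw [h3, one_mul]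
        exact hya
      by_contra hyb
      push_neg at hyb
      have h4 : y b = 0 := le_antisymm hyb (hnn b)
      rw [hy] at h2
      simp only [Pi.smul_apply, smul_eq_mul, h4, mul_zero] at h2
      exact lt_irrefl 0 h2
    exact reach_ind _ hstep (hconn.preconnected k₀ k) hk₀pos
  -- constant sign of eigenvectors
  have hsign : ∀ x : Fin n → ℝ, A *ᵥ x = d i₁ • x → x ≠ 0 → ∀ a b, 0 < x a * x b := by
    intro x hx hne a b
    obtain ⟨hAw, hedge⟩ := habs x hx
    have hwne : (fun k => |x k|) ≠ 0 := by
      intro h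
      refine hne (funext fun k => ?_)
      have := congrFun h k
      exact abs_eq_zero.1 this
    have hwpos := hpos _ hAw (fun k => abs_nonneg _) hwne
    have hxne : ∀ k, x k ≠ 0 := fun k => abs_pos.1 (hwpos k)
    have hstep : ∀ c e, G.Adj c e → 0 < x a * x c → 0 < x a * x e := by
      intro c e hce h
      have h1 : 0 < x c * x e := by
        rw [hedge c e hce]
        exact mul_pos (abs_pos.2 (hxne c)) (abs_pos.2 (hxne e))
      have hb2 : 0 < x c * x c := mul_self_pos.2 (hxne c)
      have key : x a * x e = ((x a * x c) * (x c * x e)) / (x c * x c) := by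
        rw [eq_div_iff hb2.ne']
        ring
      rw [key]
      exact div_pos (mul_pos h h1) hb2
    exact reach_ind _ hstep (hconn.preconnected a b) (mul_self_pos.2 (hxne a))
  -- column facts
  have hcol : ∀ i j, (∑ k, V k i * V k j) = if i = j then 1 else 0 := by
    intro i j
    have h := congrFun (congrFun hVtV i) j
    simpa [Matrix.mul_apply, Matrix.transpose_apply, Matrix.one_apply] using h
  have heigcol : ∀ j, A *ᵥ (fun k => V k j) = d j • (fun k => V k j) := by
    intro j
    have hAV : A * V = V * diagonal d := by
      rw [hspec, Matrix.mul_assoc, Matrix.mul_assoc, hVtV, Matrix.mul_one]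
    funext k
    have h1 : (A *ᵥ fun k => V k j) k = (A * V) k j := by
      simp [Matrix.mulVec, dotProduct, Matrix.mul_apply]
    rw [h1, hAV, Matrix.mul_diagonal]
    simp [mul_comm]
  have hcolnz : ∀ j, (fun k => V k j) ≠ 0 := by
    intro j h
    have h1 := hcol j j
    rw [if_pos rfl] at h1
    have h2 : ∀ k, V k j = 0 := fun k => congrFun h k
    simp only [h2, mul_zero, Finset.sum_const_zero] at h1
    norm_num at h1
  have hsv : ∀ a b, 0 < V a i₁ * V b i₁ :=
    hsign _ (heigcol i₁) (hcolnz i₁)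
  refine ⟨i₁, hmax, ?_, hsv⟩
  intro j hj
  by_contra hne'
  have hu_eig : A *ᵥ (fun k => V k j) = d i₁ • (fun k => V k j) := by
    rw [heigcol j, hj]
  have hsu := hsign _ hu_eig (hcolnz j)
  have horth : ∑ k, V k j * V k i₁ = 0 := by
    have := hcol j i₁
    rwa [if_neg hne'] at this
  obtain ⟨k₀⟩ := (inferInstance : Nonempty (Fin n))
  have hterm : ∀ k, 0 < (V k j * V k i₁) * (V k₀ j * V k₀ i₁) := by
    intro k
    have h1 := hsu k k₀
    have h2 := hsv k k₀
    have h3 : (V k j * V k i₁) * (V k₀ j * V k₀ i₁)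
        = (V k j * V k₀ j) * (V k i₁ * V k₀ i₁) := by ring
    rw [h3]
    exact mul_pos h1 h2
  have hsumpos : 0 < ∑ k, (V k j * V k i₁) * (V k₀ j * V k₀ i₁) :=
    Finset.sum_pos (fun k _ => hterm k) Finset.univ_nonempty
  rw [← Finset.sum_mul, horth, zero_mul] at hsumpos
  exact lt_irrefl 0 hsumpos

private lemma spec_real {n : ℕ} {A : Matrix (Fin n) (Fin n) ℝ} (hA : A.IsHermitian) :
    A = (hA.eigenvectorUnitary : Matrix (Fin n) (Fin n) ℝ)
        * diagonal hA.eigenvalues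
        * (hA.eigenvectorUnitary : Matrix (Fin n) (Fin n) ℝ)ᵀ ∧
      (hA.eigenvectorUnitary : Matrix (Fin n) (Fin n) ℝ)
        * (hA.eigenvectorUnitary : Matrix (Fin n) (Fin n) ℝ)ᵀ = 1 ∧
      (hA.eigenvectorUnitary : Matrix (Fin n) (Fin n) ℝ)ᵀ
        * (hA.eigenvectorUnitary : Matrix (Fin n) (Fin n) ℝ) = 1 := by
  have hst : star (hA.eigenvectorUnitary : Matrix (Fin n) (Fin n) ℝ)
      = (hA.eigenvectorUnitary : Matrix (Fin n) (Fin n) ℝ)ᵀ := by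
    ext i j; simp [Matrix.star_apply]
  have hVm : (hA.eigenvectorUnitary : Matrix (Fin n) (Fin n) ℝ)
      * star (hA.eigenvectorUnitary : Matrix (Fin n) (Fin n) ℝ) = 1 :=
    Matrix.mem_unitaryGroup_iff.mp hA.eigenvectorUnitary.2
  have hVm' : star (hA.eigenvectorUnitary : Matrix (Fin n) (Fin n) ℝ)
      * (hA.eigenvectorUnitary : Matrix (Fin n) (Fin n) ℝ) = 1 :=
    Matrix.mem_unitaryGroup_iff'.mp hA.eigenvectorUnitary.2
  refine ⟨?_, by rw [← hst]; exact hVm, by rw [← hst]; exact hVm'⟩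
  have h := hA.spectral_theorem
  rw [Unitary.conjStarAlgAut_apply, hst] at h
  exact h

/-- For the adjacency matrix `A` of a simple connected graph on `n ≥ 2`
vertices and `cos θ_{pq}(β) = (e^{βA})_{pq}/√((e^{βA})_{pp}(e^{βA})_{qq})`, every
communicability angle tends to `0°` as the inverse temperature `β` tends to infinity:
`lim_{β→∞} cos θ_{pq}(β) = 1` for all vertices `p, q`. -/
theorem cos_angle_tendsto_one_of_connected
    (n : ℕ) (hn : 2 ≤ n) (G : SimpleGraph (Fin n)) [DecidableRel G.Adj]
    (hconn : G.Connected) (p q : Fin n) :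
    Tendsto (fun β : ℝ =>
        NormedSpace.exp (β • G.adjMatrix ℝ) p q
          / Real.sqrt (NormedSpace.exp (β • G.adjMatrix ℝ) p p
              * NormedSpace.exp (β • G.adjMatrix ℝ) q q))
      atTop (𝓝 1) := by
  have hA : (G.adjMatrix ℝ).IsHermitian := by
    rw [Matrix.IsHermitian, Matrix.conjTranspose_eq_transpose_of_trivial]
    exact G.isSymm_adjMatrix
  set V := (hA.eigenvectorUnitary : Matrix (Fin n) (Fin n) ℝ) with hVdef
  set d := hA.eigenvalues with hddef
  obtain ⟨hspec, hVVt, hVtV⟩ := spec_real hA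
  obtain ⟨i₁, hmax, huniq, hposV⟩ := perron_core G hconn V d hspec hVVt hVtV
  have hentry : ∀ (w : Fin n → ℝ) (x y : Fin n),
      (V * diagonal w * Vᵀ) x y = ∑ i, w i * (V x i * V y i) := by
    intro w x y
    rw [Matrix.mul_apply]
    refine Finset.sum_congr rfl fun i _ => ?_
    rw [Matrix.mul_diagonal, Matrix.transpose_apply]
    ring
  have hexp : ∀ (β : ℝ) (x y : Fin n), NormedSpace.exp (β • G.adjMatrix ℝ) x y
      = ∑ i, Real.exp (β * d i) * (V x i * V y i) := by
    intro β x y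
    rw [exp_smul_eq hA β]
    exact hentry _ x y
  set F : Fin n → Fin n → ℝ → ℝ :=
    fun x y β => ∑ i, Real.exp (β * (d i - d i₁)) * (V x i * V y i) with hF
  have hFeq : ∀ (β : ℝ) (x y : Fin n),
      F x y β = Real.exp (-(β * d i₁)) * NormedSpace.exp (β • G.adjMatrix ℝ) x y := by
    intro β x y
    rw [hexp, Finset.mul_sum]
    refine Finset.sum_congr rfl fun i _ => ?_
    rw [show β * (d i - d i₁) = -(β * d i₁) + β * d i by ring, Real.exp_add]
    ring
  have hFtend : ∀ x y : Fin n, Tendsto (F x y) atTop (𝓝 (V x i₁ * V y i₁)) := by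
    intro x y
    have hlim : (V x i₁ * V y i₁) = ∑ i, (if i = i₁ then V x i₁ * V y i₁ else 0) := by
      simp
    rw [hlim]
    refine tendsto_finset_sum _ fun i _ => ?_
    by_cases hi : i = i₁
    · subst hi
      simp only [sub_self, mul_zero, Real.exp_zero, one_mul, if_pos rfl]
      exact tendsto_const_nhds
    · rw [if_neg hi]
      have hlt : d i - d i₁ < 0 := sub_neg.2 (lt_of_le_of_ne (hmax i) fun h => hi (huniq i h))
      have h1 : Tendsto (fun β : ℝ => β * (d i - d i₁)) atTop atBot :=
        tendsto_id.atTop_mul_const_of_neg hlt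
      have h2 : Tendsto (fun β : ℝ => Real.exp (β * (d i - d i₁))) atTop (𝓝 0) :=
        Real.tendsto_exp_atBot.comp h1
      simpa using h2.mul_const (V x i * V y i)
  have hL : 0 < V p i₁ * V q i₁ := hposV p q
  have hratio : ∀ β : ℝ,
      F p q β / Real.sqrt (F p p β * F q q β)
        = NormedSpace.exp (β • G.adjMatrix ℝ) p q
          / Real.sqrt (NormedSpace.exp (β • G.adjMatrix ℝ) p p
              * NormedSpace.exp (β • G.adjMatrix ℝ) q q) := by
    intro β
    have hcpos : (0:ℝ) < Real.exp (-(β * d i₁)) := Real.exp_pos _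
    rw [hFeq, hFeq, hFeq]
    have h1 : Real.exp (-(β * d i₁)) * NormedSpace.exp (β • G.adjMatrix ℝ) p p
        * (Real.exp (-(β * d i₁)) * NormedSpace.exp (β • G.adjMatrix ℝ) q q)
        = Real.exp (-(β * d i₁)) ^ 2
          * (NormedSpace.exp (β • G.adjMatrix ℝ) p p
             * NormedSpace.exp (β • G.adjMatrix ℝ) q q) := by ring
    rw [h1, Real.sqrt_mul (sq_nonneg _), Real.sqrt_sq hcpos.le,
      mul_div_mul_left _ _ (ne_of_gt hcpos)]
  have hden : Tendsto (fun β => Real.sqrt (F p p β * F q q β)) atTop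
      (𝓝 (V p i₁ * V q i₁)) := by
    have h1 := (hFtend p p).mul (hFtend q q)
    have h2 : Real.sqrt ((V p i₁ * V p i₁) * (V q i₁ * V q i₁)) = V p i₁ * V q i₁ := by
      have h3 : (V p i₁ * V p i₁) * (V q i₁ * V q i₁) = (V p i₁ * V q i₁) ^ 2 := by ring
      rw [h3, Real.sqrt_sq hL.le]
    have h4 := (Real.continuous_sqrt.continuousAt).tendsto.comp h1
    rwa [Function.comp_def, h2] at h4
  have hT := (hFtend p q).div hden (ne_of_gt hL)
  rw [div_self (ne_of_gt hL)] at hT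
  exact Tendsto.congr hratio hT
end
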